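/- arXiv:0704.0698 — 6 statements merged into one kernel-verified Lean document; each statement's English description precedes it below -/
import Mathlib

section
/- First integrals of the averaged equation for the one-dimensional hard-core piston (from Section 3.1.1): Let n₁, n₂ ≥ 1 and m_{i,j} > 0 (i = 1,2, 1 ≤ j ≤ n_i). Suppose (Q, W, s_{1,1},…,s_{1,n₁}, s_{2,1},…,s_{2,n₂}) : I → ℝ^{n₁+n₂+2} is a differentiable solution on an interval I ∋ 0 of the averaged system dQ/dτ = W; dW/dτ = (Σ_{j=1}^{n₁} m_{1,j} s_{1,j}²)/Q − (Σ_{j=1}^{n₂} m_{2,j} s_{2,j}²)/(1−Q); ds_{1,j}/dτ = −s_{1,j}W/Q; ds_{2,j}/dτ = +s_{2,j}W/(1−Q), with 0 < Q(τ) < 1 for all τ ∈ I. Then for all τ ∈ I and all j: s_{1,j}(τ)·Q(τ) = s_{1,j}(0)·Q(0), s_{2,j}(τ)·(1−Q(τ)) = s_{2,j}(0)·(1−Q(0)), and the effective Hamiltonian is conserved: ½W(τ)² + E₁(0)·Q(0)²/Q(τ)² + E₂(0)·(1−Q(0))²/(1−Q(τ))² = ½W(0)² + E₁(0) + E₂(0),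 where E_i(τ) := Σ_{j=1}^{n_i} ½ m_{i,j} s_{i,j}(τ)². -/
open Set

lemma eq_of_hasDerivAt_zero' {I : Set ℝ} (hconv : Convex ℝ I) {f : ℝ → ℝ}
    (hf : ∀ τ ∈ I, HasDerivAt f 0 τ) {a b : ℝ} (ha : a ∈ I) (hb : b ∈ I) :
    f b = f a := by
  have h := hconv.norm_image_sub_le_of_norm_hasFDerivWithin_le
    (C := 0) (f' := fun _ => ContinuousLinearMap.smulRight (1 : ℝ →L[ℝ] ℝ) (0:ℝ))
    (fun x hx => (hf x hx).hasFDerivAt.hasFDerivWithinAt)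
    (fun x hx => by simp) ha hb
  have h2 : ‖f b - f a‖ ≤ 0 := by simpa using h
  have := norm_le_zero_iff.mp h2
  linarith [sub_eq_zero.mp this]

/-- **First integrals of the averaged equation for the 1D hard-core piston.**
Along any solution of the averaged system with `0 < Q < 1`, one has
`s_{i,j}·(chamber length)` constant and the effective Hamiltonian
`½W² + E₁(0)Q(0)²/Q² + E₂(0)(1−Q(0))²/(1−Q)²` is conserved. -/
theorem piston_1d_first_integrals
    (n₁ n₂ : ℕ) (hn₁ : 1 ≤ n₁) (hn₂ : 1 ≤ n₂)
    (m₁ : Fin n₁ → ℝ) (m₂ : Fin n₂ → ℝ)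
    (hm₁ : ∀ j, 0 < m₁ j) (hm₂ : ∀ j, 0 < m₂ j)
    (I : Set ℝ) (hI : I.OrdConnected) (h0 : (0:ℝ) ∈ I)
    (Q W : ℝ → ℝ) (s₁ : Fin n₁ → ℝ → ℝ) (s₂ : Fin n₂ → ℝ → ℝ)
    (hQrange : ∀ τ ∈ I, 0 < Q τ ∧ Q τ < 1)
    (hQ : ∀ τ ∈ I, HasDerivAt Q (W τ) τ)
    (hW : ∀ τ ∈ I, HasDerivAt W
      ((∑ j, m₁ j * (s₁ j τ)^2) / Q τ - (∑ j, m₂ j * (s₂ j τ)^2) / (1 - Q τ)) τ)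
    (hs₁ : ∀ j, ∀ τ ∈ I, HasDerivAt (s₁ j) (-(s₁ j τ * W τ) / Q τ) τ)
    (hs₂ : ∀ j, ∀ τ ∈ I, HasDerivAt (s₂ j) (s₂ j τ * W τ / (1 - Q τ)) τ) :
    ∀ τ ∈ I,
      (∀ j, s₁ j τ * Q τ = s₁ j 0 * Q 0) ∧
      (∀ j, s₂ j τ * (1 - Q τ) = s₂ j 0 * (1 - Q 0)) ∧
      (W τ)^2 / 2
          + (∑ j, m₁ j * (s₁ j 0)^2 / 2) * (Q 0)^2 / (Q τ)^2
          + (∑ j, m₂ j * (s₂ j 0)^2 / 2) * (1 - Q 0)^2 / (1 - Q τ)^2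
        = (W 0)^2 / 2 + (∑ j, m₁ j * (s₁ j 0)^2 / 2) + (∑ j, m₂ j * (s₂ j 0)^2 / 2) := by
  have hconv : Convex ℝ I := hI.convex
  have hQne : ∀ τ ∈ I, Q τ ≠ 0 := fun τ hτ => (hQrange τ hτ).1.ne'
  have hQne' : ∀ τ ∈ I, (1 : ℝ) - Q τ ≠ 0 := fun τ hτ => by
    have := (hQrange τ hτ).2; linarith
  -- first integrals s₁ j * Q
  have key₁ : ∀ j, ∀ τ ∈ I, s₁ j τ * Q τ = s₁ j 0 * Q 0 := by
    intro j τ hτ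
    refine eq_of_hasDerivAt_zero' (f := fun τ => s₁ j τ * Q τ) hconv ?_ h0 hτ
    intro x hx
    have h := (hs₁ j x hx).mul (hQ x hx)
    refine h.congr_deriv (Eq.symm ?_)
    rw [div_mul_cancel₀ _ (hQne x hx)]
    ring
  have key₂ : ∀ j, ∀ τ ∈ I, s₂ j τ * (1 - Q τ) = s₂ j 0 * (1 - Q 0) := by
    intro j τ hτ
    refine eq_of_hasDerivAt_zero' (f := fun τ => s₂ j τ * (1 - Q τ)) hconv ?_ h0 hτ
    intro x hx
    have h := (hs₂ j x hx).mul ((hasDerivAt_const x (1:ℝ)).sub (hQ x hx))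
    refine h.congr_deriv (Eq.symm ?_)
    show (0:ℝ) = s₂ j x * W x / (1 - Q x) * (1 - Q x) + s₂ j x * (0 - W x)
    rw [div_mul_cancel₀ _ (hQne' x hx)]
    ring
  intro τ hτ
  refine ⟨fun j => key₁ j τ hτ, fun j => key₂ j τ hτ, ?_⟩
  -- summed first integrals
  have hA : ∀ x ∈ I, (∑ j, m₁ j * (s₁ j x)^2) * (Q x)^2 = (∑ j, m₁ j * (s₁ j 0)^2) * (Q 0)^2 := by
    intro x hx
    rw [Finset.sum_mul, Finset.sum_mul]
    refine Finset.sum_congr rfl fun j _ => ?_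
    have := key₁ j x hx
    linear_combination m₁ j * (s₁ j x * Q x + s₁ j 0 * Q 0) * this
  have hB : ∀ x ∈ I, (∑ j, m₂ j * (s₂ j x)^2) * (1 - Q x)^2
      = (∑ j, m₂ j * (s₂ j 0)^2) * (1 - Q 0)^2 := by
    intro x hx
    rw [Finset.sum_mul, Finset.sum_mul]
    refine Finset.sum_congr rfl fun j _ => ?_
    have := key₂ j x hx
    linear_combination m₂ j * (s₂ j x * (1 - Q x) + s₂ j 0 * (1 - Q 0)) * this
  set A0 := ∑ j, m₁ j * (s₁ j 0)^2 with hA0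
  set B0 := ∑ j, m₂ j * (s₂ j 0)^2 with hB0
  have hsum₁ : (∑ j, m₁ j * (s₁ j 0)^2 / 2) = A0 / 2 := by
    rw [hA0, Finset.sum_div]
  have hsum₂ : (∑ j, m₂ j * (s₂ j 0)^2 / 2) = B0 / 2 := by
    rw [hB0, Finset.sum_div]
  rw [hsum₁, hsum₂]
  -- Hamiltonian is constant
  have hH : ∀ x ∈ I,
      (W x)^2 / 2 + A0 / 2 * (Q 0)^2 / (Q x)^2 + B0 / 2 * (1 - Q 0)^2 / (1 - Q x)^2
      = (W 0)^2 / 2 + A0 / 2 * (Q 0)^2 / (Q 0)^2 + B0 / 2 * (1 - Q 0)^2 / (1 - Q 0)^2 := by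
    intro x hx
    refine eq_of_hasDerivAt_zero'
      (f := fun x => (W x)^2 / 2 + A0 / 2 * (Q 0)^2 / (Q x)^2
        + B0 / 2 * (1 - Q 0)^2 / (1 - Q x)^2) hconv ?_ h0 hx
    intro y hy
    have hQy := hQne y hy
    have hQy' := hQne' y hy
    have d1 : HasDerivAt (fun x => (W x)^2 / 2)
        ((2 * W y ^ 1 * ((∑ j, m₁ j * (s₁ j y)^2) / Q y - (∑ j, m₂ j * (s₂ j y)^2) / (1 - Q y))) / 2) y :=
      ((hW y hy).pow 2).div_const 2
    have d2 : HasDerivAt (fun x => A0 / 2 * (Q 0)^2 / (Q x)^2)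
        ((0 * (Q y)^2 - A0 / 2 * (Q 0)^2 * (2 * Q y ^ 1 * W y)) / ((Q y)^2)^2) y :=
      (hasDerivAt_const y (A0 / 2 * (Q 0)^2)).div ((hQ y hy).pow 2) (pow_ne_zero 2 hQy)
    have d3 : HasDerivAt (fun x => B0 / 2 * (1 - Q 0)^2 / (1 - Q x)^2)
        ((0 * (1 - Q y)^2 - B0 / 2 * (1 - Q 0)^2 * (2 * (1 - Q y) ^ 1 * (0 - W y))) / ((1 - Q y)^2)^2) y :=
      (hasDerivAt_const y (B0 / 2 * (1 - Q 0)^2)).div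
        (((hasDerivAt_const y (1:ℝ)).sub (hQ y hy)).pow 2) (pow_ne_zero 2 hQy')
    have h := (d1.add d2).add d3
    refine h.congr_deriv (Eq.symm ?_)
    have hQy2 : (Q y)^2 ≠ 0 := pow_ne_zero 2 hQy
    have hQy2' : ((1:ℝ) - Q y)^2 ≠ 0 := pow_ne_zero 2 hQy'
    have eA : (∑ j, m₁ j * (s₁ j y)^2) = A0 * (Q 0)^2 / (Q y)^2 := by
      rw [eq_div_iff hQy2]; exact hA y hy
    have eB : (∑ j, m₂ j * (s₂ j y)^2) = B0 * (1 - Q 0)^2 / (1 - Q y)^2 := by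
      rw [eq_div_iff hQy2']; exact hB y hy
    rw [eA, eB]
    field_simp
    ring
  have := hH τ hτ
  have e1 : A0 / 2 * (Q 0) ^ 2 / (Q 0) ^ 2 = A0 / 2 := by
    rw [mul_div_assoc, div_self (pow_ne_zero 2 (hQne 0 h0)), mul_one]
  have e2 : B0 / 2 * (1 - Q 0) ^ 2 / (1 - Q 0) ^ 2 = B0 / 2 := by
    rw [mul_div_assoc, div_self (pow_ne_zero 2 (hQne' 0 h0)), mul_one]
  rw [e1, e2] at this
  exact this
end

section
/- Regularity and asymptotics of the soft-core periods (Lemma `1d_smooth_periods`): Fix masses m₁, m₂ > 0 and ℰ ∈ (0, κ(0)/2). For 0 < δ < ℰ/2, Q ∈ (ℰ, 1−ℰ), E ∈ (ℰ, κ(0)−ℰ), with a(E,δ) := δ·κ⁻¹(E), define T₁(Q,E,δ) := 2∫_{a}^{Q−a} √((m₁/2)/(E − κ_δ(s) − κ_δ(Q−s))) ds and T₂(Q,E,δ) := 2∫_{Q+a}^{1−a} √((m₂/2)/(E − κ_δ(s−Q) − κ_δ(1−s))) ds, and set T₁(Q,E,0) := √(2m₁/E)·Q and T₂(Q,E,0)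 := √(2m₂/E)·(1−Q). Then T₁ and T₂ are C¹ on the domain {(Q,E,δ) : Q ∈ (ℰ, 1−ℰ), E ∈ (ℰ, κ(0)−ℰ), 0 ≤ δ < ℰ/2}, and there is a constant C (depending on κ, m₁, m₂, ℰ) such that |T₁(Q,E,δ) − √(2m₁/E)·Q| ≤ C·δ and |T₂(Q,E,δ) − √(2m₂/E)·(1−Q)| ≤ C·δ on this domain. -/
set_option maxHeartbeats 1000000

open Set MeasureTheory intervalIntegral Filter
open scoped Interval

lemma paramC1 {Φ Φ' : ℝ → ℝ → ℝ} {U : Set ℝ} (hU : IsOpen U) {a b : ℝ} (hab : a ≤ b)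
    (hΦ : ContinuousOn (fun p : ℝ × ℝ => Φ p.1 p.2) (U ×ˢ Icc a b))
    (hΦd : ∀ E ∈ U, ∀ t ∈ Icc a b, HasDerivAt (fun y => Φ y t) (Φ' E t) E)
    (hΦ' : ContinuousOn (fun p : ℝ × ℝ => Φ' p.1 p.2) (U ×ˢ Icc a b)) :
    ContDiffOn ℝ 1 (fun E => ∫ t in a..b, Φ E t) U := by
  have hIoc : Ι a b ⊆ Icc a b := by rw [uIoc_of_le hab]; exact Ioc_subset_Icc_self
  have slice : ∀ E ∈ U, ContinuousOn (Φ E) (Icc a b) := by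
    intro E hE
    exact hΦ.comp (f := fun t => (E, t)) (Continuous.continuousOn (by fun_prop)) (fun t ht => ⟨hE, ht⟩)
  have slice' : ∀ E ∈ U, ContinuousOn (Φ' E) (Icc a b) := by
    intro E hE
    exact hΦ'.comp (f := fun t => (E, t)) (Continuous.continuousOn (by fun_prop)) (fun t ht => ⟨hE, ht⟩)
  have sliceE' : ∀ t ∈ Icc a b, ContinuousOn (fun x => Φ' x t) U := by
    intro t ht
    exact hΦ'.comp (f := fun x => (x, t)) (Continuous.continuousOn (by fun_prop)) (fun x hx => ⟨hx, ht⟩)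
  have meas : ∀ E ∈ U, AEStronglyMeasurable (Φ E) (volume.restrict (Ι a b)) := by
    intro E hE
    rw [uIoc_of_le hab]
    exact (((slice E hE).mono Ioc_subset_Icc_self).aestronglyMeasurable measurableSet_Ioc)
  have meas' : ∀ E ∈ U, AEStronglyMeasurable (Φ' E) (volume.restrict (Ι a b)) := by
    intro E hE
    rw [uIoc_of_le hab]
    exact (((slice' E hE).mono Ioc_subset_Icc_self).aestronglyMeasurable measurableSet_Ioc)
  set D : ℝ → ℝ := fun x => ∫ t in a..b, Φ' x t with hD
  have key : ∀ E₀ ∈ U, HasDerivAt (fun E => ∫ t in a..b, Φ E t) (D E₀) E₀ := by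
    intro E₀ hE₀
    obtain ⟨r, hr, hball⟩ := Metric.isOpen_iff.1 hU E₀ hE₀
    have hcb : Metric.closedBall E₀ (r/2) ⊆ U :=
      (Metric.closedBall_subset_ball (by linarith)).trans hball
    obtain ⟨M, hM⟩ := ((isCompact_closedBall E₀ (r/2)).prod isCompact_Icc).exists_bound_of_continuousOn
      (hΦ'.mono (prod_mono hcb subset_rfl))
    have hballU : Metric.ball E₀ (r/2) ⊆ U := (Metric.ball_subset_closedBall).trans hcb
    refine (intervalIntegral.hasDerivAt_integral_of_dominated_loc_of_deriv_le (F := Φ)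
      (F' := Φ') (bound := fun _ => M) (Metric.ball_mem_nhds E₀ (half_pos hr)) ?_ ?_ ?_ ?_ ?_ ?_).2
    · exact eventually_of_mem (Metric.ball_mem_nhds E₀ (half_pos hr)) (fun x hx => meas x (hballU hx))
    · exact ((slice E₀ hE₀).mono (by rw [uIcc_of_le hab])).intervalIntegrable
    · exact meas' E₀ hE₀
    · refine ae_of_all _ (fun t ht x hx => ?_)
      exact hM (x, t) ⟨Metric.ball_subset_closedBall hx, hIoc ht⟩
    · exact intervalIntegrable_const
    · refine ae_of_all _ (fun t ht x hx => ?_)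
      exact hΦd x (hballU hx) t (hIoc ht)
  have hDcont : ContinuousOn D U := by
    intro E₁ hE₁
    refine ContinuousAt.continuousWithinAt ?_
    obtain ⟨r, hr, hball⟩ := Metric.isOpen_iff.1 hU E₁ hE₁
    have hcb : Metric.closedBall E₁ (r/2) ⊆ U :=
      (Metric.closedBall_subset_ball (by linarith)).trans hball
    obtain ⟨M, hM⟩ := ((isCompact_closedBall E₁ (r/2)).prod isCompact_Icc).exists_bound_of_continuousOn
      (hΦ'.mono (prod_mono hcb subset_rfl))
    have hballU : Metric.ball E₁ (r/2) ⊆ U := (Metric.ball_subset_closedBall).trans hcb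
    refine intervalIntegral.tendsto_integral_filter_of_dominated_convergence (μ := volume)
      (F := fun x t => Φ' x t) (fun _ => M) ?_ ?_ intervalIntegrable_const ?_
    · exact eventually_of_mem (Metric.ball_mem_nhds E₁ (half_pos hr)) (fun x hx => meas' x (hballU hx))
    · refine eventually_of_mem (Metric.ball_mem_nhds E₁ (half_pos hr)) (fun x hx => ?_)
      exact ae_of_all _ (fun t ht => hM (x, t) ⟨Metric.ball_subset_closedBall hx, hIoc ht⟩)
    · refine ae_of_all _ (fun t ht => ?_)
      exact ((sliceE' t (hIoc ht) E₁ hE₁).continuousAt (hU.mem_nhds hE₁)).tendsto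
  rw [show (1 : WithTop ℕ∞) = (0 : WithTop ℕ∞) + 1 by norm_num,
    contDiffOn_succ_iff_deriv_of_isOpen hU]
  refine ⟨fun E hE => ((key E hE).differentiableAt).differentiableWithinAt, by simp, ?_⟩
  rw [contDiffOn_zero]
  exact hDcont.congr (fun E hE => (key E hE).deriv)


/-- **Lemma (Regularity and asymptotics of the soft-core periods).**
The periods `T₁, T₂` of the frozen soft-core motion are `C¹` on
`(ℰ,1−ℰ) × (ℰ,κ(0)−ℰ) × [0,ℰ/2)` (including `δ = 0`), and
`T₁(Q,E,δ) = √(2m₁/E)·Q + O(δ)`, `T₂(Q,E,δ) = √(2m₂/E)·(1−Q) + O(δ)` uniformly. -/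
theorem one_d_smooth_periods
    (κ : ℝ → ℝ) (hκC2 : ContDiff ℝ 2 κ)
    (hκ0 : ∀ x : ℝ, 1 ≤ x → κ x = 0) (hκ'neg : ∀ x : ℝ, x < 1 → deriv κ x < 0)
    (κinv : ℝ → ℝ)
    (hκinv_left : ∀ x ∈ Set.Icc (0:ℝ) 1, κinv (κ x) = x)
    (hκinv_right : ∀ y ∈ Set.Icc 0 (κ 0), κ (κinv y) = y ∧ κinv y ∈ Set.Icc (0:ℝ) 1)
    (hκinvC2 : ContDiffOn ℝ 2 κinv (Set.Ioc 0 (κ 0)))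
    (hκinv'neg : ∀ y ∈ Set.Ioc 0 (κ 0), deriv κinv y < 0)
    (hκinv'atbot : Filter.Tendsto (deriv κinv) (nhdsWithin 0 (Set.Ioi 0)) Filter.atBot)
    (m₁ m₂ : ℝ) (hm₁ : 0 < m₁) (hm₂ : 0 < m₂)
    (ℰ : ℝ) (hℰpos : 0 < ℰ) (hℰlt : ℰ < κ 0 / 2)
    (T₁ T₂ : ℝ → ℝ → ℝ → ℝ)
    (hT₁0 : ∀ Q E, T₁ Q E 0 = Real.sqrt (2 * m₁ / E) * Q)
    (hT₂0 : ∀ Q E, T₂ Q E 0 = Real.sqrt (2 * m₂ / E) * (1 - Q))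
    (hT₁ : ∀ Q E δ, 0 < δ → T₁ Q E δ =
      2 * ∫ s in (δ * κinv E)..(Q - δ * κinv E),
        Real.sqrt ((m₁ / 2) / (E - κ (s / δ) - κ ((Q - s) / δ))))
    (hT₂ : ∀ Q E δ, 0 < δ → T₂ Q E δ =
      2 * ∫ s in (Q + δ * κinv E)..(1 - δ * κinv E),
        Real.sqrt ((m₂ / 2) / (E - κ ((s - Q) / δ) - κ ((1 - s) / δ)))) :
    ContDiffOn ℝ 1 (fun p : ℝ × ℝ × ℝ => T₁ p.1 p.2.1 p.2.2)
        (Set.Ioo ℰ (1 - ℰ) ×ˢ Set.Ioo ℰ (κ 0 - ℰ) ×ˢ Set.Ico 0 (ℰ / 2)) ∧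
    ContDiffOn ℝ 1 (fun p : ℝ × ℝ × ℝ => T₂ p.1 p.2.1 p.2.2)
        (Set.Ioo ℰ (1 - ℰ) ×ˢ Set.Ioo ℰ (κ 0 - ℰ) ×ˢ Set.Ico 0 (ℰ / 2)) ∧
    ∃ C : ℝ, ∀ Q ∈ Set.Ioo ℰ (1 - ℰ), ∀ E ∈ Set.Ioo ℰ (κ 0 - ℰ),
      ∀ δ ∈ Set.Ico (0:ℝ) (ℰ / 2),
        |T₁ Q E δ - Real.sqrt (2 * m₁ / E) * Q| ≤ C * δ ∧
        |T₂ Q E δ - Real.sqrt (2 * m₂ / E) * (1 - Q)| ≤ C * δ := by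
  have hκcont : Continuous κ := hκC2.continuous
  have hκ0pos : 0 < κ 0 := by linarith
  have hκ1 : κ 1 = 0 := hκ0 1 le_rfl
  have hstrict : StrictAntiOn κ (Iic 1) := by
    refine strictAntiOn_of_deriv_neg (convex_Iic 1) hκcont.continuousOn ?_
    intro x hx; rw [interior_Iic] at hx; exact hκ'neg x hx
  have hκnonneg : ∀ x, 0 ≤ κ x := by
    intro x
    rcases le_or_gt 1 x with hx | hx
    · rw [hκ0 x hx]
    · have := hstrict (mem_Iic.2 hx.le) (mem_Iic.2 le_rfl) hx
      rw [hκ1] at this; linarith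
  have hκanti : Antitone κ := by
    intro x y hxy
    rcases le_or_gt y 1 with hy | hy
    · rcases eq_or_lt_of_le hxy with rfl | hlt
      · exact le_rfl
      · exact (hstrict (mem_Iic.2 (hlt.le.trans hy)) (mem_Iic.2 hy) hlt).le
    · rw [hκ0 y hy.le]; exact hκnonneg x
  have hκinvκ0 : κinv (κ 0) = 0 := hκinv_left 0 ⟨le_rfl, zero_le_one⟩
  have hκinv_anti : ∀ y₁ ∈ Icc 0 (κ 0), ∀ y₂ ∈ Icc 0 (κ 0), y₁ < y₂ → κinv y₂ < κinv y₁ := by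
    intro y₁ h₁ y₂ h₂ h12
    by_contra hcon
    push_neg at hcon
    have k₁ := hκinv_right y₁ h₁
    have k₂ := hκinv_right y₂ h₂
    have : y₂ ≤ y₁ := by
      calc y₂ = κ (κinv y₂) := (k₂.1).symm
        _ ≤ κ (κinv y₁) := by
            rcases eq_or_lt_of_le hcon with heq | hlt
            · rw [heq]
            · exact hκanti hlt.le
        _ = y₁ := k₁.1
    linarith
  -- φ and regularity infrastructure
  set φ : ℝ → ℝ := fun y => -(deriv κinv y) with hφdef
  have hκinvC2' : ContDiffOn ℝ 2 κinv (Ioo 0 (κ 0)) := hκinvC2.mono Ioo_subset_Ioc_self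
  have hφC1 : ContDiffOn ℝ 1 φ (Ioo 0 (κ 0)) := by
    exact (hκinvC2'.deriv_of_isOpen isOpen_Ioo (m := 1) (by norm_num)).neg
  have hφcont : ContinuousOn φ (Ioo 0 (κ 0)) := hφC1.continuousOn
  have hφ'cont : ContinuousOn (deriv φ) (Ioo 0 (κ 0)) :=
    hφC1.continuousOn_deriv_of_isOpen isOpen_Ioo (le_refl 1)
  have hκinvHasDeriv : ∀ y ∈ Ioo 0 (κ 0), HasDerivAt κinv (deriv κinv y) y := by
    intro y hy
    have hmem : Ioc 0 (κ 0) ∈ nhds y := mem_nhds_iff.2 ⟨Ioo 0 (κ 0), Ioo_subset_Ioc_self, isOpen_Ioo, hy⟩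
    exact ((hκinvC2.contDiffAt hmem).differentiableAt (by norm_num)).hasDerivAt
  have hφHasDeriv : ∀ y ∈ Ioo 0 (κ 0), HasDerivAt φ (deriv φ y) y := by
    intro y hy
    exact ((hφC1.differentiableOn one_ne_zero).differentiableAt (isOpen_Ioo.mem_nhds hy)).hasDerivAt
  -- the β split point
  set β : ℝ := κinv (ℰ/4) with hβdef
  have hℰ4mem : ℰ/4 ∈ Icc 0 (κ 0) := ⟨by linarith, by linarith⟩
  have hκβ := hκinv_right _ hℰ4mem
  have hβ1 : β ≤ 1 := hκβ.2.2
  have hβ0 : 0 ≤ β := hκβ.2.1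
  have hβpos : 0 < β := by
    rcases eq_or_lt_of_le hβ0 with heq | h
    · exfalso
      have : κ β = κ 0 := by rw [← heq]
      rw [hκβ.1] at this
      linarith
    · exact h
  -- domain W
  set W : Set ℝ := Ioo (ℰ/2) (κ 0 - ℰ/2) with hWdef
  have hWsub : W ⊆ Ioo 0 (κ 0) := fun x hx => ⟨by have := hx.1; simp only [hWdef] at *; linarith,
    by have := hx.2; simp only [hWdef] at *; linarith⟩
  -- A integral
  set AInt : ℝ → ℝ := fun E => ∫ v in (0:ℝ)..1, φ (E - (E - ℰ/4)*v^2) with hAIntdef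
  have hargmem : ∀ E ∈ W, ∀ v ∈ Icc (0:ℝ) 1, E - (E - ℰ/4)*v^2 ∈ Ioo 0 (κ 0) := by
    intro E hE v hv
    obtain ⟨hE1, hE2⟩ := hE
    obtain ⟨hv0, hv1⟩ := hv
    have hv2 : v^2 ≤ 1 := by nlinarith
    have hv2' : 0 ≤ v^2 := sq_nonneg v
    constructor
    · nlinarith
    · nlinarith
  have hAC1 : ContDiffOn ℝ 1 AInt W := by
    refine paramC1 isOpen_Ioo zero_le_one ?_ ?_ ?_
      (Φ' := fun E v => deriv φ (E - (E - ℰ/4)*v^2) * (1 - v^2))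
    · refine hφcont.comp (f := fun p : ℝ × ℝ => p.1 - (p.1 - ℰ/4)*p.2^2)
        (Continuous.continuousOn (by fun_prop)) ?_
      intro p hp
      exact hargmem p.1 hp.1 p.2 hp.2
    · intro E hE v hv
      have inner : HasDerivAt (fun y : ℝ => y - (y - ℰ/4)*v^2) (1 - v^2) E := by
        have := (hasDerivAt_id E).sub (((hasDerivAt_id E).sub_const (ℰ/4)).mul_const (v^2))
        simpa [Pi.sub_def] using this
      exact HasDerivAt.comp (h₂ := φ) E (hφHasDeriv _ (hargmem E hE v hv)) inner
    · refine ContinuousOn.mul ?_ (Continuous.continuousOn (by fun_prop))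
      refine hφ'cont.comp (f := fun p : ℝ × ℝ => p.1 - (p.1 - ℰ/4)*p.2^2)
        (Continuous.continuousOn (by fun_prop)) ?_
      intro p hp
      exact hargmem p.1 hp.1 p.2 hp.2
  -- B integral
  set Bfn : ℝ → ℝ := fun E => ∫ x in β..1, (Real.sqrt (E - κ x))⁻¹ with hBfndef
  have hEκpos : ∀ E ∈ W, ∀ x ∈ Icc β 1, ℰ/4 ≤ E - κ x := by
    intro E hE x hx
    have : κ x ≤ κ β := hκanti hx.1
    rw [hκβ.1] at this
    have := hE.1
    simp only [hWdef, mem_Ioo] at hE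
    linarith [hE.1]
  have hBC1 : ContDiffOn ℝ 1 Bfn W := by
    refine paramC1 isOpen_Ioo hβ1 ?_ ?_ ?_
      (Φ' := fun E x => -(1/(2*Real.sqrt (E - κ x))) / (Real.sqrt (E - κ x))^2)
    · refine ContinuousOn.inv₀ (Continuous.continuousOn (by fun_prop)) ?_
      intro p hp
      have h0 : 0 < p.1 - κ p.2 := lt_of_lt_of_le (by linarith) (hEκpos p.1 hp.1 p.2 hp.2)
      positivity
    · intro E hE x hx
      have hpos : 0 < E - κ x := lt_of_lt_of_le (by linarith) (hEκpos E hE x hx)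
      have inner : HasDerivAt (fun y : ℝ => Real.sqrt (y - κ x)) (1/(2*Real.sqrt (E - κ x))) E := by
        have := (Real.hasDerivAt_sqrt (ne_of_gt hpos)).comp E ((hasDerivAt_id E).sub_const (κ x))
        simpa [Function.comp_def] using this
      have hsne : Real.sqrt (E - κ x) ≠ 0 := by positivity
      exact inner.inv hsne
    · have scont : Continuous (fun p : ℝ × ℝ => Real.sqrt (p.1 - κ p.2)) := by fun_prop
      have hne : ∀ p ∈ (W ×ˢ Icc β 1 : Set (ℝ × ℝ)), Real.sqrt (p.1 - κ p.2) ≠ 0 := by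
        intro p hp
        have h0 : 0 < p.1 - κ p.2 := lt_of_lt_of_le (by linarith) (hEκpos p.1 hp.1 p.2 hp.2)
        positivity
      refine ContinuousOn.div ?_ ((scont.pow 2).continuousOn) (fun p hp => pow_ne_zero 2 (hne p hp))
      refine ContinuousOn.neg ?_
      exact continuousOn_const.div ((continuous_const.mul scont).continuousOn)
        (fun p hp => mul_ne_zero two_ne_zero (hne p hp))
  -- the function h
  set hfn : ℝ → ℝ → ℝ := fun m E =>
    4*Real.sqrt (m/2)*(2*(Real.sqrt (E - ℰ/4) * AInt E) + Bfn E - (Real.sqrt E)⁻¹) with hhdef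
  have hhC1 : ∀ m : ℝ, ContDiffOn ℝ 1 (hfn m) W := by
    intro m
    have h1 : ContDiffOn ℝ 1 (fun E => Real.sqrt (E - ℰ/4)) W := by
      intro E hE
      have h0 : (0:ℝ) < E - ℰ/4 := by
        have := hE.1; simp only [hWdef, mem_Ioo] at hE; linarith [hE.1]
      exact ((Real.contDiffAt_sqrt (ne_of_gt h0)).comp E
        (contDiffAt_id.sub contDiffAt_const)).contDiffWithinAt
    have h2 : ContDiffOn ℝ 1 (fun E => (Real.sqrt E)⁻¹) W := by
      intro E hE
      have hE0 : 0 < E := (hWsub hE).1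
      have hsne : Real.sqrt E ≠ 0 := by positivity
      exact (((Real.contDiffAt_sqrt (ne_of_gt hE0)).comp E contDiffAt_id).inv hsne).contDiffWithinAt
    exact contDiffOn_const.mul (((contDiffOn_const.mul (h1.mul hAC1)).add hBC1).sub h2)
  have hιEmem : ∀ E ∈ Ioo ℰ (κ 0 - ℰ), E ∈ Icc 0 (κ 0) := by
    intro E hE
    exact ⟨by linarith [hE.1], by linarith [hE.2]⟩
  have keyI : ∀ m : ℝ, 0 < m → ∀ L ∈ Ioo ℰ (1-ℰ), ∀ E ∈ Ioo ℰ (κ 0 - ℰ), ∀ δ ∈ Ioo 0 (ℰ/2),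
      (2 * ∫ s in (δ * κinv E)..(L - δ * κinv E),
        Real.sqrt ((m/2)/(E - κ (s/δ) - κ ((L - s)/δ))))
      = Real.sqrt (2*m/E) * L + δ * hfn m E := by
    intro m hm L hL E hE δ hδ
    obtain ⟨hδ0, hδε⟩ := hδ
    obtain ⟨hL1, hL2⟩ := hL
    obtain ⟨hE1, hE2⟩ := hE
    have hδne : δ ≠ 0 := ne_of_gt hδ0
    have hE0 : 0 < E := by linarith
    have hEκ : E < κ 0 := by linarith
    have hEmem : E ∈ Icc 0 (κ 0) := ⟨hE0.le, hEκ.le⟩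
    set kE : ℝ := κinv E with hkEdef
    have hkE := hκinv_right E hEmem
    rw [← hkEdef] at hkE
    have hkE01 : kE ∈ Icc (0:ℝ) 1 := hkE.2
    have hκkE : κ kE = E := hkE.1
    have hkEpos : 0 < kE := by
      rcases eq_or_lt_of_le hkE01.1 with heq | h
      · exfalso
        have h0 : κ kE = κ 0 := by rw [← heq]
        rw [hκkE] at h0
        linarith
      · exact h
    have hkE1 : kE < 1 := by
      rcases eq_or_lt_of_le hkE01.2 with heq | h
      · exfalso
        have h0 : κ kE = κ 1 := by rw [heq]
        rw [hκkE, hκ1] at h0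
        linarith
      · exact h
    have hkEβ : kE < β := hκinv_anti (ℰ/4) hℰ4mem E hEmem (by linarith)
    set M : ℝ := L/δ with hMdef
    have hM2 : 2 < M := by
      rw [hMdef, lt_div_iff₀ hδ0]; linarith
    set rE : ℝ := Real.sqrt (E - ℰ/4) with hrEdef
    have hErE : (0:ℝ) < E - ℰ/4 := by linarith
    have hrEpos : 0 < rE := Real.sqrt_pos.2 hErE
    have hrE2 : rE^2 = E - ℰ/4 := Real.sq_sqrt hErE.le
    set F : ℝ → ℝ := fun x => (Real.sqrt (E - κ x))⁻¹ with hFdef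
    set g : ℝ → ℝ := fun x => (Real.sqrt (E - κ x - κ (M - x)))⁻¹ with hgdef
    -- step A : rewrite the integrand
    have hintrep : ∀ s : ℝ, Real.sqrt ((m/2)/(E - κ (s/δ) - κ ((L - s)/δ)))
        = Real.sqrt (m/2) * g (s/δ) := by
      intro s
      rw [Real.sqrt_div (by positivity : (0:ℝ) ≤ m/2), div_eq_mul_inv]
      congr 3
      rw [hMdef, sub_div]
    -- step B : scaling substitution
    have hstepB : (∫ s in (δ * kE)..(L - δ * kE), g (s/δ)) = δ • ∫ x in kE..(M - kE), g x := by
      have := intervalIntegral.integral_comp_div (a := δ * kE) (b := L - δ * kE) (f := g) hδne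
      rw [this, mul_div_cancel_left₀ _ hδne, sub_div, mul_div_cancel_left₀ _ hδne]
    -- symmetry of g
    have hgsymm : ∀ x, g (M - x) = g x := by
      intro x
      simp only [hgdef]
      rw [sub_sub_cancel, sub_right_comm]
    -- g agrees with F on the left half
    have hEqgF : EqOn g F (Icc kE (M/2)) := by
      intro x hx
      simp only [hgdef, hFdef]
      rw [hκ0 (M - x) (by cases hx; linarith), sub_zero]
    -- core change of variables on [kE, β]
    set gm : ℝ → ℝ := fun u => κinv (E - u^2) with hgmdef
    set gm' : ℝ → ℝ := fun u => deriv κinv (E - u^2) * (-(2*u)) with hgm'def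
    have humem : ∀ u ∈ Ioo 0 rE, E - u^2 ∈ Ioo (ℰ/4) E := by
      intro u hu
      have h1 : u^2 < rE^2 := by
        have := pow_lt_pow_left₀ hu.2 hu.1.le (n := 2) (by norm_num)
        exact this
      have h2 : 0 < u^2 := pow_pos hu.1 2
      rw [hrE2] at h1
      exact ⟨by linarith, by linarith⟩
    have humem' : ∀ u ∈ Ioo 0 rE, E - u^2 ∈ Ioo 0 (κ 0) := by
      intro u hu
      have := humem u hu
      exact ⟨by linarith [this.1], by linarith [this.2]⟩
    have humem'' : ∀ u ∈ Ioo 0 rE, E - u^2 ∈ Icc 0 (κ 0) := by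
      intro u hu
      have := humem' u hu
      exact ⟨this.1.le, this.2.le⟩
    have hder : ∀ u ∈ Ioo 0 rE, HasDerivWithinAt gm (gm' u) (Ioo 0 rE) u := by
      intro u hu
      have h1 := hκinvHasDeriv _ (humem' u hu)
      have h2 : HasDerivAt (fun u : ℝ => E - u^2) (-(2*u)) u := by
        have h := (hasDerivAt_pow 2 u).const_sub E
        norm_num at h
        exact h
      exact ((h1.comp u h2)).hasDerivWithinAt
    have hinj : InjOn gm (Ioo 0 rE) := by
      intro u1 h1 u2 h2 heq
      have e1 : κ (gm u1) = E - u1^2 := (hκinv_right _ (humem'' u1 h1)).1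
      have e2 : κ (gm u2) = E - u2^2 := (hκinv_right _ (humem'' u2 h2)).1
      rw [heq] at e1
      rw [e2] at e1
      have : u1^2 = u2^2 := by linarith
      calc u1 = Real.sqrt (u1^2) := (Real.sqrt_sq h1.1.le).symm
        _ = Real.sqrt (u2^2) := by rw [this]
        _ = u2 := Real.sqrt_sq h2.1.le
    have himg : gm '' (Ioo 0 rE) = Ioo kE β := by
      ext y
      constructor
      · rintro ⟨u, hu, rfl⟩
        have hy := humem u hu
        constructor
        · exact hκinv_anti _ (humem'' u hu) E hEmem hy.2
        · exact hκinv_anti (ℰ/4) hℰ4mem _ (humem'' u hu) hy.1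
      · intro hy
        have hy01 : y ∈ Icc (0:ℝ) 1 := ⟨hkE01.1.trans hy.1.le, hy.2.le.trans hβ1⟩
        have hκy1 : ℰ/4 < κ y := by
          have := hstrict (mem_Iic.2 hy01.2) (mem_Iic.2 hβ1) hy.2
          rw [hκβ.1] at this; exact this
        have hκy2 : κ y < E := by
          have := hstrict (mem_Iic.2 hkE01.2) (mem_Iic.2 hy01.2) hy.1
          rw [hκkE] at this; exact this
        refine ⟨Real.sqrt (E - κ y), ⟨Real.sqrt_pos.2 (by linarith), ?_⟩, ?_⟩
        · rw [hrEdef]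
          exact Real.sqrt_lt_sqrt (by linarith) (by linarith)
        · simp only [hgmdef]
          rw [Real.sq_sqrt (by linarith : (0:ℝ) ≤ E - κ y), sub_sub_cancel]
          exact hκinv_left y hy01
    have hchg := integral_image_eq_integral_abs_deriv_smul measurableSet_Ioo hder hinj F
    have hRHSeq : EqOn (fun u => |gm' u| • F (gm u)) (fun u => 2 * φ (E - u^2)) (Ioo 0 rE) := by
      intro u hu
      have hy := humem u hu
      have hyIoc : E - u^2 ∈ Ioc 0 (κ 0) := ⟨by linarith [hy.1], by linarith [hy.2]⟩
      have hκκ : κ (gm u) = E - u^2 := (hκinv_right _ (humem'' u hu)).1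
      have hd : deriv κinv (E - u^2) < 0 := hκinv'neg _ hyIoc
      simp only [hgm'def, hFdef, smul_eq_mul, hφdef]
      rw [hκκ, sub_sub_cancel, Real.sqrt_sq hu.1.le, abs_mul, abs_of_neg hd, abs_neg,
        abs_of_pos (by linarith [hu.1] : (0:ℝ) < 2*u)]
      have hune : u ≠ 0 := ne_of_gt hu.1
      field_simp
    have hcoreset : ∫ x in Ioo kE β, F x = ∫ u in Ioo 0 rE, 2 * φ (E - u^2) := by
      rw [← himg, hchg]
      exact MeasureTheory.setIntegral_congr_fun measurableSet_Ioo hRHSeq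
    have hφcontIcc : ContinuousOn (fun u => 2 * φ (E - u^2)) (Icc 0 rE) := by
      refine continuousOn_const.mul (hφcont.comp (f := fun u : ℝ => E - u^2)
        (Continuous.continuousOn (by fun_prop)) ?_)
      intro u hu
      have h1 : u^2 ≤ rE^2 := by
        have := pow_le_pow_left₀ hu.1 hu.2 2
        exact this
      have h2 : 0 ≤ u^2 := sq_nonneg u
      rw [hrE2] at h1
      refine ⟨?_, ?_⟩
      · show 0 < E - u^2
        linarith
      · show E - u^2 < κ 0
        linarith
    have hIntΨ : IntegrableOn (fun u => 2 * φ (E - u^2)) (Ioo 0 rE) := by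
      exact (hφcontIcc.integrableOn_compact isCompact_Icc).mono_set Ioo_subset_Icc_self
    have hIntF1 : IntervalIntegrable F volume kE β := by
      rw [intervalIntegrable_iff_integrableOn_Ioo_of_le hkEβ.le, ← himg,
        integrableOn_image_iff_integrableOn_abs_deriv_smul measurableSet_Ioo hder hinj]
      exact hIntΨ.congr_fun (fun u hu => (hRHSeq hu).symm) measurableSet_Ioo
    -- value of core piece
    have hAIntval : ∫ x in kE..β, F x = 2 * (rE * AInt E) := by
      rw [integral_of_le hkEβ.le, MeasureTheory.integral_Ioc_eq_integral_Ioo, hcoreset,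
        ← MeasureTheory.integral_Ioc_eq_integral_Ioo, ← integral_of_le hrEpos.le]
      have hcomp := intervalIntegral.integral_comp_mul_left (a := (0:ℝ)) (b := 1)
        (f := fun u => 2 * φ (E - u^2)) (c := rE) (ne_of_gt hrEpos)
      rw [mul_zero, mul_one] at hcomp
      have : ∫ x in (0:ℝ)..1, 2 * φ (E - (rE*x)^2) = rE⁻¹ • ∫ u in (0:ℝ)..rE, 2 * φ (E - u^2) := hcomp
      have h2 : ∫ x in (0:ℝ)..1, 2 * φ (E - (rE*x)^2) = 2 * AInt E := by
        rw [hAIntdef]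
        rw [← intervalIntegral.integral_const_mul]
        refine intervalIntegral.integral_congr ?_
        intro v hv
        simp only
        rw [mul_pow, hrE2]
      rw [h2] at this
      rw [smul_eq_mul] at this
      field_simp at this ⊢
      linarith [this]
    -- other integrabilities
    have hcontF2 : ContinuousOn F (Icc β (M/2)) := by
      refine ContinuousOn.inv₀ (Continuous.continuousOn (by fun_prop)) ?_
      intro x hx
      have hκx : κ x ≤ ℰ/4 := by
        have := hκanti hx.1
        rw [hκβ.1] at this; exact this
      have h0 : 0 < E - κ x := by linarith
      positivity
    have hβM2 : β ≤ M/2 := by linarith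
    have h1M2 : (1:ℝ) ≤ M/2 := by linarith
    have hIntF2 : IntervalIntegrable F volume β (M/2) := by
      refine ContinuousOn.intervalIntegrable ?_
      rwa [uIcc_of_le hβM2]
    have hIntFβ1 : IntervalIntegrable F volume β 1 :=
      hIntF2.mono_set (by rw [uIcc_of_le hβ1, uIcc_of_le hβM2]; exact Icc_subset_Icc le_rfl h1M2)
    have hIntF1M2 : IntervalIntegrable F volume 1 (M/2) :=
      hIntF2.mono_set (by rw [uIcc_of_le h1M2, uIcc_of_le hβM2]; exact Icc_subset_Icc hβ1 le_rfl)
    have hIntFkM2 : IntervalIntegrable F volume kE (M/2) := hIntF1.trans hIntF2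
    have hgFae : F =ᵐ[volume.restrict (Ι kE (M/2))] g := by
      rw [uIoc_of_le (by linarith : kE ≤ M/2)]
      refine (MeasureTheory.ae_restrict_iff' measurableSet_Ioc).2 (MeasureTheory.ae_of_all _ ?_)
      intro x hx
      exact (hEqgF ⟨hx.1.le, hx.2⟩).symm
    have hIntg1 : IntervalIntegrable g volume kE (M/2) := hIntFkM2.congr_ae hgFae
    have hIntg2 : IntervalIntegrable g volume (M/2) (M - kE) := by
      have := (hIntg1.comp_sub_left M).symm
      have heq : (fun x => g (M - x)) = g := funext hgsymm
      rw [heq] at this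
      have hMM : M - M/2 = M/2 := by ring
      rwa [hMM] at this
    -- symmetry of the integral
    have hrefl : ∫ x in (M/2)..(M - kE), g x = ∫ x in kE..(M/2), g x := by
      have hc := intervalIntegral.integral_comp_sub_left (a := kE) (b := M/2) (f := g) M
      have heq : (fun x => g (M - x)) = g := funext hgsymm
      rw [heq] at hc
      have hMM : M - M/2 = M/2 := by ring
      rw [hMM] at hc
      exact hc.symm
    -- tail piece
    have htail : ∫ x in (1:ℝ)..(M/2), F x = (M/2 - 1) * (Real.sqrt E)⁻¹ := by
      have : EqOn F (fun _ => (Real.sqrt E)⁻¹) (Icc 1 (M/2)) := by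
        intro x hx
        simp only [hFdef]
        rw [hκ0 x hx.1, sub_zero]
      rw [intervalIntegral.integral_congr (by rwa [uIcc_of_le h1M2]), intervalIntegral.integral_const,
        smul_eq_mul]
    -- assemble the x-integral
    have hxint : ∫ x in kE..(M - kE), g x
        = 2 * (2 * (rE * AInt E) + Bfn E + (M/2 - 1) * (Real.sqrt E)⁻¹) := by
      rw [← intervalIntegral.integral_add_adjacent_intervals hIntg1 hIntg2, hrefl]
      have hleft : ∫ x in kE..(M/2), g x
          = 2 * (rE * AInt E) + Bfn E + (M/2 - 1) * (Real.sqrt E)⁻¹ := by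
        rw [intervalIntegral.integral_congr (g := F) (by rwa [uIcc_of_le (by linarith : kE ≤ M/2)])]
        rw [← intervalIntegral.integral_add_adjacent_intervals hIntF1 hIntF2,
          ← intervalIntegral.integral_add_adjacent_intervals hIntFβ1 hIntF1M2,
          hAIntval, htail]
        simp only [hFdef, hBfndef]
        ring
      rw [hleft]
      ring
    -- put everything together
    have hfinal : (∫ s in (δ * kE)..(L - δ * kE),
        Real.sqrt ((m/2)/(E - κ (s/δ) - κ ((L - s)/δ))))
        = Real.sqrt (m/2) * (δ * (2 * (2 * (rE * AInt E) + Bfn E + (M/2 - 1) * (Real.sqrt E)⁻¹))) := by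
      calc (∫ s in (δ * kE)..(L - δ * kE), Real.sqrt ((m/2)/(E - κ (s/δ) - κ ((L - s)/δ))))
          = ∫ s in (δ * kE)..(L - δ * kE), Real.sqrt (m/2) * g (s/δ) := by
            refine intervalIntegral.integral_congr ?_
            intro s _
            exact hintrep s
        _ = Real.sqrt (m/2) * ∫ s in (δ * kE)..(L - δ * kE), g (s/δ) := by
            rw [intervalIntegral.integral_const_mul]
        _ = Real.sqrt (m/2) * (δ * (2 * (2 * (rE * AInt E) + Bfn E + (M/2 - 1) * (Real.sqrt E)⁻¹))) := by
            rw [hstepB, hxint, smul_eq_mul]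
    have hsqrt2mE : Real.sqrt (2*m/E) = 2 * Real.sqrt (m/2) * (Real.sqrt E)⁻¹ := by
      rw [Real.sqrt_div (by positivity : (0:ℝ) ≤ 2*m) E]
      rw [show (2*m : ℝ) = 4*(m/2) by ring, Real.sqrt_mul (by norm_num : (0:ℝ) ≤ 4),
        show (4:ℝ) = 2^2 by norm_num, Real.sqrt_sq (by norm_num : (0:ℝ) ≤ 2)]
      ring
    have halg : ∀ (sq aa bb e : ℝ),
        2*(sq*(δ*(2*(2*aa + bb + (L/δ/2 - 1)*e)))) = 2*sq*e*L + δ*(4*sq*(2*aa + bb - e)) := by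
      intro sq aa bb e
      field_simp
      ring
    rw [hfinal, hsqrt2mE]
    simp only [hhdef, ← hrEdef, hMdef]
    exact halg (Real.sqrt (m/2)) (rE * AInt E) (Bfn E) (Real.sqrt E)⁻¹
  -- closed forms for T₁ and T₂ on the whole domain (including δ = 0)
  have key1 : ∀ Q ∈ Ioo ℰ (1-ℰ), ∀ E ∈ Ioo ℰ (κ 0 - ℰ), ∀ δ ∈ Ico (0:ℝ) (ℰ/2),
      T₁ Q E δ = Real.sqrt (2*m₁/E) * Q + δ * hfn m₁ E := by
    intro Q hQ E hE δ hδ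
    rcases eq_or_lt_of_le hδ.1 with heq | hpos
    · rw [← heq, hT₁0 Q E]; ring
    · rw [hT₁ Q E δ hpos]
      exact keyI m₁ hm₁ Q hQ E hE δ ⟨hpos, hδ.2⟩
  have key2 : ∀ Q ∈ Ioo ℰ (1-ℰ), ∀ E ∈ Ioo ℰ (κ 0 - ℰ), ∀ δ ∈ Ico (0:ℝ) (ℰ/2),
      T₂ Q E δ = Real.sqrt (2*m₂/E) * (1-Q) + δ * hfn m₂ E := by
    intro Q hQ E hE δ hδ
    rcases eq_or_lt_of_le hδ.1 with heq | hpos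
    · rw [← heq, hT₂0 Q E]; ring
    · rw [hT₂ Q E δ hpos]
      have hL : (1-Q) ∈ Ioo ℰ (1-ℰ) := ⟨by linarith [hQ.2], by linarith [hQ.1]⟩
      have hstep : (∫ s in (Q + δ * κinv E)..(1 - δ * κinv E),
          Real.sqrt ((m₂/2)/(E - κ ((s - Q)/δ) - κ ((1 - s)/δ))))
          = ∫ t in (δ * κinv E)..((1-Q) - δ * κinv E),
            Real.sqrt ((m₂/2)/(E - κ (t/δ) - κ (((1-Q) - t)/δ))) := by
        have hcong : EqOn (fun s => Real.sqrt ((m₂/2)/(E - κ ((s - Q)/δ) - κ ((1 - s)/δ))))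
            (fun s => Real.sqrt ((m₂/2)/(E - κ ((s - Q)/δ) - κ (((1-Q) - (s - Q))/δ))))
            (uIcc (Q + δ * κinv E) (1 - δ * κinv E)) := by
          intro s _
          simp only
          rw [show (1:ℝ) - s = (1-Q) - (s - Q) by ring]
        rw [intervalIntegral.integral_congr hcong]
        have := intervalIntegral.integral_comp_sub_right (a := Q + δ * κinv E)
          (b := 1 - δ * κinv E)
          (f := fun t => Real.sqrt ((m₂/2)/(E - κ (t/δ) - κ (((1-Q) - t)/δ)))) Q
        rw [this, add_sub_cancel_left, show (1:ℝ) - δ * κinv E - Q = (1-Q) - δ * κinv E by ring]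
      rw [hstep]
      exact keyI m₂ hm₂ (1-Q) hL E hE δ ⟨hpos, hδ.2⟩
  -- the C¹ regularity of the closed forms
  have hIooW : Ioo ℰ (κ 0 - ℰ) ⊆ W := by
    intro x hx
    exact ⟨by linarith [hx.1], by linarith [hx.2]⟩
  have hsub : (Ioo ℰ (1-ℰ) ×ˢ Ioo ℰ (κ 0 - ℰ) ×ˢ Ico (0:ℝ) (ℰ/2))
      ⊆ ((univ : Set ℝ) ×ˢ W ×ˢ (univ : Set ℝ)) := by
    intro p hp
    exact ⟨mem_univ _, hIooW hp.2.1, mem_univ _⟩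
  have hproj : ContDiff ℝ 1 (fun p : ℝ×ℝ×ℝ => p.2.1) := contDiff_fst.comp contDiff_snd
  have hmapsTo : MapsTo (fun p : ℝ×ℝ×ℝ => p.2.1) ((univ : Set ℝ) ×ˢ W ×ˢ (univ : Set ℝ)) W :=
    fun p hp => hp.2.1
  have hsqrtm : ∀ m : ℝ, 0 < m → ContDiffOn ℝ 1 (fun E => Real.sqrt (2*m/E)) W := by
    intro m hm0 E hE
    have hE0 : 0 < E := (hWsub hE).1
    have harg : (2*m/E : ℝ) ≠ 0 := by positivity
    exact ((Real.contDiffAt_sqrt harg).comp E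
      (contDiffAt_const.div contDiffAt_id (ne_of_gt hE0))).contDiffWithinAt
  have hCF : ∀ m : ℝ, 0 < m → ContDiffOn ℝ 1
      (fun p : ℝ×ℝ×ℝ => Real.sqrt (2*m/p.2.1) * p.1 + p.2.2 * hfn m p.2.1)
      ((univ : Set ℝ) ×ˢ W ×ˢ (univ : Set ℝ)) := by
    intro m hm0
    have h1 : ContDiffOn ℝ 1 (fun p : ℝ×ℝ×ℝ => Real.sqrt (2*m/p.2.1))
        ((univ : Set ℝ) ×ˢ W ×ˢ (univ : Set ℝ)) :=
      (hsqrtm m hm0).comp hproj.contDiffOn hmapsTo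
    have h2 : ContDiffOn ℝ 1 (fun p : ℝ×ℝ×ℝ => hfn m p.2.1)
        ((univ : Set ℝ) ×ˢ W ×ˢ (univ : Set ℝ)) :=
      (hhC1 m).comp hproj.contDiffOn hmapsTo
    exact (h1.mul contDiff_fst.contDiffOn).add
      (((contDiff_snd.comp contDiff_snd).contDiffOn).mul h2)
  have hCF2 : ContDiffOn ℝ 1
      (fun p : ℝ×ℝ×ℝ => Real.sqrt (2*m₂/p.2.1) * (1 - p.1) + p.2.2 * hfn m₂ p.2.1)
      ((univ : Set ℝ) ×ˢ W ×ˢ (univ : Set ℝ)) := by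
    have h1 : ContDiffOn ℝ 1 (fun p : ℝ×ℝ×ℝ => Real.sqrt (2*m₂/p.2.1))
        ((univ : Set ℝ) ×ˢ W ×ˢ (univ : Set ℝ)) :=
      (hsqrtm m₂ hm₂).comp hproj.contDiffOn hmapsTo
    have h2 : ContDiffOn ℝ 1 (fun p : ℝ×ℝ×ℝ => hfn m₂ p.2.1)
        ((univ : Set ℝ) ×ˢ W ×ˢ (univ : Set ℝ)) :=
      (hhC1 m₂).comp hproj.contDiffOn hmapsTo
    exact (h1.mul (contDiff_const.sub contDiff_fst).contDiffOn).add
      (((contDiff_snd.comp contDiff_snd).contDiffOn).mul h2)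
  refine ⟨?_, ?_, ?_⟩
  · refine ContDiffOn.congr (((hCF m₁ hm₁).mono hsub)) ?_
    intro p hp
    exact key1 p.1 hp.1 p.2.1 hp.2.1 p.2.2 hp.2.2
  · refine ContDiffOn.congr ((hCF2.mono hsub)) ?_
    intro p hp
    exact key2 p.1 hp.1 p.2.1 hp.2.1 p.2.2 hp.2.2
  · -- the uniform bound
    have hIccW : Icc ℰ (κ 0 - ℰ) ⊆ W := by
      intro x hx
      exact ⟨by linarith [hx.1], by linarith [hx.2]⟩
    obtain ⟨C₁, hC₁⟩ := isCompact_Icc.exists_bound_of_continuousOn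
      (((hhC1 m₁).continuousOn).mono hIccW)
    obtain ⟨C₂, hC₂⟩ := isCompact_Icc.exists_bound_of_continuousOn
      (((hhC1 m₂).continuousOn).mono hIccW)
    refine ⟨max C₁ C₂, ?_⟩
    intro Q hQ E hE δ hδ
    have hEIcc : E ∈ Icc ℰ (κ 0 - ℰ) := ⟨hE.1.le, hE.2.le⟩
    have hb1 : |hfn m₁ E| ≤ max C₁ C₂ := by
      have := hC₁ E hEIcc
      rw [Real.norm_eq_abs] at this
      exact this.trans (le_max_left _ _)
    have hb2 : |hfn m₂ E| ≤ max C₁ C₂ := by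
      have := hC₂ E hEIcc
      rw [Real.norm_eq_abs] at this
      exact this.trans (le_max_right _ _)
    constructor
    · rw [key1 Q hQ E hE δ hδ, add_sub_cancel_left, abs_mul, abs_of_nonneg hδ.1, mul_comm]
      exact mul_le_mul_of_nonneg_right hb1 hδ.1
    · rw [key2 Q hQ E hE δ hδ, add_sub_cancel_left, abs_mul, abs_of_nonneg hδ.1, mul_comm]
      exact mul_le_mul_of_nonneg_right hb2 hδ.1
end

section
/- Uniform bound on the normalized singular integral of (κ⁻¹)'' (claim in the proof of Lemma `1d_smooth_ode`): For every ℰ ∈ (0, κ(0)/2), the quantity sup over E₁ ∈ [ℰ, κ(0)−ℰ] of the sup over e ∈ (0, E₁] of | (1/(κ⁻¹)'(e)) · ∫_e^{E₁} (κ⁻¹)''(u)/√(E₁−u) du | is finite. -/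
open Set MeasureTheory intervalIntegral

/-- **Uniform bound on the normalized singular integral of `(κ⁻¹)''`.**
The quantity `(1/(κ⁻¹)'(e)) · ∫_e^{E₁} (κ⁻¹)''(u)/√(E₁−u) du` is bounded uniformly over
`E₁ ∈ [ℰ, κ(0)−ℰ]` and `e ∈ (0, E₁]`. -/
theorem kappa_inv_second_deriv_bound
    (κ : ℝ → ℝ) (hκC2 : ContDiff ℝ 2 κ)
    (hκ0 : ∀ x : ℝ, 1 ≤ x → κ x = 0) (hκ'neg : ∀ x : ℝ, x < 1 → deriv κ x < 0)
    (κinv : ℝ → ℝ)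
    (hκinv_left : ∀ x ∈ Set.Icc (0:ℝ) 1, κinv (κ x) = x)
    (hκinv_right : ∀ y ∈ Set.Icc 0 (κ 0), κ (κinv y) = y ∧ κinv y ∈ Set.Icc (0:ℝ) 1)
    (hκinvC2 : ContDiffOn ℝ 2 κinv (Set.Ioc 0 (κ 0)))
    (hκinv'neg : ∀ y ∈ Set.Ioc 0 (κ 0), deriv κinv y < 0)
    (hκinv'atbot : Filter.Tendsto (deriv κinv) (nhdsWithin 0 (Set.Ioi 0)) Filter.atBot)
    (ℰ : ℝ) (hℰpos : 0 < ℰ) (hℰlt : ℰ < κ 0 / 2) :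
    ∃ C : ℝ, ∀ E₁ ∈ Set.Icc ℰ (κ 0 - ℰ), ∀ e ∈ Set.Ioc (0:ℝ) E₁,
      |(1 / deriv κinv e) *
        ∫ u in e..E₁, deriv (deriv κinv) u / Real.sqrt (E₁ - u)| ≤ C := by
  set κ0 : ℝ := κ 0 with hκ0def
  have hκ0pos : 0 < κ0 := by linarith
  have hE32 : ℰ / 2 ≤ κ0 - ℰ := by linarith
  have hIooSub : Set.Icc (ℰ/2) (κ0 - ℰ) ⊆ Set.Ioo 0 κ0 := fun x hx =>
    ⟨by linarith [hx.1], by linarith [hx.2]⟩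
  have hC2 : ContDiffOn ℝ 2 κinv (Set.Ioo 0 κ0) := hκinvC2.mono Set.Ioo_subset_Ioc_self
  have hC1 : ContDiffOn ℝ 1 (deriv κinv) (Set.Ioo 0 κ0) :=
    hC2.deriv_of_isOpen isOpen_Ioo (by norm_num)
  have hAcont : ContinuousOn (deriv κinv) (Set.Ioo 0 κ0) := hC1.continuousOn
  have hA2cont : ContinuousOn (deriv (deriv κinv)) (Set.Ioo 0 κ0) :=
    (show ContDiffOn ℝ 0 (deriv (deriv κinv)) (Set.Ioo 0 κ0) from
      hC1.deriv_of_isOpen isOpen_Ioo (by norm_num)).continuousOn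
  have hAderiv : ∀ u ∈ Set.Ioo 0 κ0, HasDerivAt (deriv κinv) (deriv (deriv κinv) u) u := by
    intro u hu
    exact ((hC1.differentiableOn (by norm_num) u hu).differentiableAt
      (isOpen_Ioo.mem_nhds hu)).hasDerivAt
  have hKderiv : ∀ u ∈ Set.Ioo 0 κ0, HasDerivAt κinv (deriv κinv u) u := by
    intro u hu
    exact ((hC2.differentiableOn (by norm_num) u hu).differentiableAt
      (isOpen_Ioo.mem_nhds hu)).hasDerivAt
  -- sup of |second derivative| on the compact core
  obtain ⟨uL, huL, hL⟩ := isCompact_Icc.exists_isMaxOn ⟨ℰ/2, le_refl _, hE32⟩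
    ((hA2cont.mono hIooSub).abs)
  set L := |deriv (deriv κinv) uL| with hLdef
  have hLnn : 0 ≤ L := abs_nonneg _
  -- sup of |first derivative| on the compact core
  obtain ⟨uM, huM, hM⟩ := isCompact_Icc.exists_isMaxOn ⟨ℰ/2, le_refl _, hE32⟩
    ((hAcont.mono hIooSub).abs)
  set M := |deriv κinv uM| with hMdef
  have hMnn : 0 ≤ M := abs_nonneg _
  -- uniform lower bound on |deriv κinv| on (0, κ0 - ℰ]
  have hev : ∀ᶠ y in nhdsWithin 0 (Set.Ioi 0), deriv κinv y ≤ -1 :=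
    hκinv'atbot.eventually (Filter.eventually_le_atBot (-1))
  rw [eventually_nhdsWithin_iff] at hev
  obtain ⟨ε, hεpos, hε⟩ := Metric.eventually_nhds_iff.mp hev
  set η := min (ε/2) (ℰ/2) with hηdef
  have hηpos : 0 < η := lt_min (by linarith) (by linarith)
  have hηle : η ≤ κ0 - ℰ := le_trans (min_le_right _ _) hE32
  obtain ⟨u0, hu0, hmax⟩ := isCompact_Icc.exists_isMaxOn ⟨η, le_refl _, hηle⟩
    (hAcont.mono (fun x hx => ⟨lt_of_lt_of_le hηpos hx.1, by linarith [hx.2]⟩))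
  have hu0neg : deriv κinv u0 < 0 := hκinv'neg u0
    ⟨lt_of_lt_of_le hηpos hu0.1, by linarith [hu0.2]⟩
  set m := min 1 (-(deriv κinv u0)) with hmdef
  have hmpos : 0 < m := lt_min one_pos (by linarith)
  have hm : ∀ x ∈ Set.Ioc (0:ℝ) (κ0 - ℰ), deriv κinv x ≤ -m := by
    intro x hx
    rcases lt_or_ge x η with h | h
    · have hxε : x < ε := by
        have := min_le_left (ε/2) (ℰ/2); linarith
      have h1 : deriv κinv x ≤ -1 :=
        hε (by rw [Real.dist_eq, sub_zero, abs_of_pos hx.1]; exact hxε) hx.1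
      have h2 : m ≤ 1 := min_le_left _ _
      linarith
    · have h1 : deriv κinv x ≤ deriv κinv u0 := hmax ⟨h, hx.2⟩
      have h2 : m ≤ -(deriv κinv u0) := min_le_right _ _
      linarith
  -- constants
  set s := (Real.sqrt (ℰ/2))⁻¹ with hsdef
  have hsqpos : 0 < Real.sqrt (ℰ/2) := Real.sqrt_pos.mpr (by linarith)
  have hsnn : 0 ≤ s := inv_nonneg.mpr hsqpos.le
  set W := (2 * Real.sqrt (ℰ/2) * (ℰ/2))⁻¹ with hWdef
  have hWnn : 0 ≤ W := inv_nonneg.mpr (by positivity)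
  refine ⟨(2*L*Real.sqrt κ0 + M*s + W)/m + s, ?_⟩
  intro E₁ hE₁ e he
  have heκ : e ∈ Set.Ioc 0 (κ0 - ℰ) := ⟨he.1, he.2.trans hE₁.2⟩
  have hAe : deriv κinv e ≤ -m := hm e heκ
  have hAene : deriv κinv e ≠ 0 := ne_of_lt (by linarith)
  have habsm : m ≤ |deriv κinv e| := by
    rw [abs_of_neg (by linarith : deriv κinv e < 0)]; linarith
  set f : ℝ → ℝ := fun u => deriv (deriv κinv) u / Real.sqrt (E₁ - u) with hfdef
  have hfmeas : Measurable f := (measurable_deriv _).div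
    ((Real.continuous_sqrt.comp (continuous_const.sub continuous_id)).measurable)
  -- main estimate away from 0
  have hmain : ∀ a, ℰ/2 ≤ a → a ≤ E₁ →
      IntervalIntegrable f volume a E₁ ∧ |∫ u in a..E₁, f u| ≤ 2*L*Real.sqrt κ0 := by
    intro a ha hab
    set φ : ℝ → ℝ := fun u => L * (E₁ - u) ^ (-(1/2) : ℝ) with hφdef
    have hφint : IntervalIntegrable φ volume a E₁ := by
      have h1 : IntervalIntegrable (fun x : ℝ => x ^ (-(1/2):ℝ)) volume 0 (E₁ - a) :=
        intervalIntegral.intervalIntegrable_rpow' (by norm_num)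
      have h2 := (h1.comp_sub_left E₁).symm
      simp only [sub_zero, sub_sub_cancel] at h2
      exact h2.const_mul L
    have hbound : ∀ u ∈ Set.Ioc a E₁, ‖f u‖ ≤ φ u := by
      intro u hu
      have h0 : (0:ℝ) ≤ E₁ - u := by linarith [hu.2]
      have hA2u : |deriv (deriv κinv) u| ≤ L :=
        hL ⟨le_trans ha hu.1.le, le_trans hu.2 hE₁.2⟩
      show |deriv (deriv κinv) u / Real.sqrt (E₁ - u)| ≤ L * (E₁ - u) ^ (-(1/2) : ℝ)
      rw [abs_div, abs_of_nonneg (Real.sqrt_nonneg _), div_eq_mul_inv,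
        Real.rpow_neg h0, Real.sqrt_eq_rpow]
      exact mul_le_mul_of_nonneg_right hA2u (inv_nonneg.mpr (Real.rpow_nonneg h0 _))
    have hfint : IntervalIntegrable f volume a E₁ := by
      rw [intervalIntegrable_iff_integrableOn_Ioc_of_le hab]
      have hφ' : MeasureTheory.IntegrableOn φ (Set.Ioc a E₁) volume :=
        (intervalIntegrable_iff_integrableOn_Ioc_of_le hab).mp hφint
      exact hφ'.mono' hfmeas.aestronglyMeasurable
        ((MeasureTheory.ae_restrict_iff' measurableSet_Ioc).mpr (MeasureTheory.ae_of_all _ hbound))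
    refine ⟨hfint, ?_⟩
    have hval : ∫ u in a..E₁, φ u = L * (2 * Real.sqrt (E₁ - a)) := by
      have hcv : ∫ u in a..E₁, (E₁ - u) ^ (-(1/2):ℝ) = ∫ x in (E₁ - E₁)..(E₁ - a), x ^ (-(1/2):ℝ) :=
        intervalIntegral.integral_comp_sub_left (fun x => x ^ (-(1/2):ℝ)) E₁
      show ∫ u in a..E₁, L * (E₁ - u) ^ (-(1/2):ℝ) = L * (2 * Real.sqrt (E₁ - a))
      rw [intervalIntegral.integral_const_mul, hcv, sub_self,
        integral_rpow (Or.inl (by norm_num)), Real.zero_rpow (by norm_num),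
        show (-(1/2) : ℝ) + 1 = 1/2 by norm_num, Real.sqrt_eq_rpow]
      ring
    have haeb : ∀ᵐ t ∂(volume.restrict (Set.uIoc a E₁)), ‖f t‖ ≤ φ t := by
      refine (MeasureTheory.ae_restrict_iff' measurableSet_uIoc).mpr (MeasureTheory.ae_of_all _ ?_)
      intro u hu
      rw [Set.uIoc_of_le hab] at hu
      exact hbound u hu
    have h1 := intervalIntegral.norm_integral_le_abs_of_norm_le haeb hφint
    rw [Real.norm_eq_abs] at h1
    calc |∫ u in a..E₁, f u| ≤ |∫ u in a..E₁, φ u| := h1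
      _ = L * (2 * Real.sqrt (E₁ - a)) := by rw [hval]; exact abs_of_nonneg (by positivity)
      _ ≤ 2 * L * Real.sqrt κ0 := by
          have hs2 : Real.sqrt (E₁ - a) ≤ Real.sqrt κ0 := Real.sqrt_le_sqrt (by linarith [hE₁.2])
          nlinarith [Real.sqrt_nonneg (E₁ - a)]
  have hC0nn : 0 ≤ 2*L*Real.sqrt κ0 + M*s + W :=
    add_nonneg (add_nonneg (mul_nonneg (mul_nonneg (by norm_num) hLnn) (Real.sqrt_nonneg _))
      (mul_nonneg hMnn hsnn)) hWnn
  have tri : ∀ x y z : ℝ, |x - y - z| ≤ |x| + |y| + |z| := by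
    intro x y z
    refine abs_le.mpr ⟨?_, ?_⟩
    · linarith [neg_abs_le x, le_abs_self y, le_abs_self z]
    · linarith [le_abs_self x, neg_abs_le y, neg_abs_le z]
  have hkey : |∫ u in e..E₁, f u| ≤ 2*L*Real.sqrt κ0 + M*s + W + |deriv κinv e| * s := by
    rcases le_or_gt (ℰ/2) e with hcase | hcase
    · have h := (hmain e hcase he.2).2
      have h2 : 0 ≤ |deriv κinv e| * s := mul_nonneg (abs_nonneg _) hsnn
      have h3 : 0 ≤ M * s := mul_nonneg hMnn hsnn
      linarith
    · set b : ℝ := ℰ/2 with hbdef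
      have hbpos : 0 < b := by linarith
      have hbE : b ≤ E₁ := le_trans (by linarith) hE₁.1
      have hsub : Set.uIcc e b ⊆ Set.Ioo 0 κ0 := by
        rw [Set.uIcc_of_le hcase.le]
        intro u hu
        exact ⟨lt_of_lt_of_le he.1 hu.1, by linarith [hu.2, hE32]⟩
      have hposu : ∀ u ∈ Set.uIcc e b, ℰ/2 ≤ E₁ - u := by
        intro u hu
        rw [Set.uIcc_of_le hcase.le] at hu
        have h1 := hu.2
        have h2 := hE₁.1
        simp only [hbdef] at h1
        linarith
      set w : ℝ → ℝ := fun u => (Real.sqrt (E₁ - u))⁻¹ with hwdef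
      set w2 : ℝ → ℝ := fun u => (2 * Real.sqrt (E₁ - u) * (E₁ - u))⁻¹ with hw2def
      have hw : ∀ u ∈ Set.uIcc e b, HasDerivAt w (w2 u) u := by
        intro u hu
        have h0 : (0:ℝ) < E₁ - u := lt_of_lt_of_le (by linarith) (hposu u hu)
        have h1 : HasDerivAt (fun x : ℝ => E₁ - x) (-1) u := (hasDerivAt_id u).const_sub E₁
        have h2 : HasDerivAt (fun x : ℝ => Real.sqrt (E₁ - x))
            (-1 / (2 * Real.sqrt (E₁ - u))) u := by
          have := h1.sqrt (ne_of_gt h0)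
          simpa using this
        have hsne : Real.sqrt (E₁ - u) ≠ 0 := ne_of_gt (Real.sqrt_pos.mpr h0)
        have h3 : HasDerivAt w _ u := h2.inv hsne
        convert h3 using 1
        have hsq : Real.sqrt (E₁ - u) * Real.sqrt (E₁ - u) = E₁ - u := Real.mul_self_sqrt h0.le
        show (2 * Real.sqrt (E₁ - u) * (E₁ - u))⁻¹ = _
        rw [← hsq]
        field_simp
        rw [Real.sqrt_sq (Real.sqrt_nonneg _)]
      have hw2cont : ContinuousOn w2 (Set.uIcc e b) := by
        apply ContinuousOn.inv₀
        · exact ((continuous_const.mul (Real.continuous_sqrt.comp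
            (continuous_const.sub continuous_id))).mul
            (continuous_const.sub continuous_id)).continuousOn
        · intro u hu
          have h0 : (0:ℝ) < E₁ - u := lt_of_lt_of_le (by linarith) (hposu u hu)
          exact ne_of_gt (mul_pos (mul_pos two_pos (Real.sqrt_pos.mpr h0)) h0)
      have hw2int : IntervalIntegrable w2 volume e b := hw2cont.intervalIntegrable
      have hA2int : IntervalIntegrable (deriv (deriv κinv)) volume e b :=
        (hA2cont.mono hsub).intervalIntegrable
      have hAint : IntervalIntegrable (deriv κinv) volume e b :=
        (hAcont.mono hsub).intervalIntegrable
      have hibp := intervalIntegral.integral_mul_deriv_eq_deriv_mul hw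
        (fun x hx => hAderiv x (hsub hx)) hw2int hA2int
      have hI1eq : ∫ u in e..b, f u = ∫ x in e..b, w x * deriv (deriv κinv) x := by
        apply intervalIntegral.integral_congr
        intro x _
        show deriv (deriv κinv) x / Real.sqrt (E₁ - x)
          = (Real.sqrt (E₁ - x))⁻¹ * deriv (deriv κinv) x
        rw [div_eq_mul_inv, mul_comm]
      have hFTC : ∫ x in e..b, deriv κinv x = κinv b - κinv e :=
        intervalIntegral.integral_eq_sub_of_hasDerivAt (fun x hx => hKderiv x (hsub hx)) hAint
      have hwble : ∀ u ∈ Set.uIcc e b, |w u| ≤ s := by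
        intro u hu
        have h1 : Real.sqrt (ℰ/2) ≤ Real.sqrt (E₁ - u) := Real.sqrt_le_sqrt (hposu u hu)
        show |(Real.sqrt (E₁ - u))⁻¹| ≤ s
        rw [abs_of_nonneg (inv_nonneg.mpr (Real.sqrt_nonneg _))]
        exact inv_anti₀ hsqpos h1
      have hAb : |deriv κinv b| ≤ M := hM ⟨le_refl _, hE32⟩
      have hterm3 : |∫ x in e..b, w2 x * deriv κinv x| ≤ W := by
        have hgint : IntervalIntegrable (fun u => -(deriv κinv u) * W) volume e b :=
          (hAint.neg).mul_const W
        have haeb : ∀ᵐ t ∂(volume.restrict (Set.uIoc e b)),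
            ‖w2 t * deriv κinv t‖ ≤ -(deriv κinv t) * W := by
          refine (MeasureTheory.ae_restrict_iff' measurableSet_uIoc).mpr
            (MeasureTheory.ae_of_all _ ?_)
          intro u hu
          rw [Set.uIoc_of_le hcase.le] at hu
          have hub : u ≤ ℰ/2 := hu.2
          have h0 : (0:ℝ) < E₁ - u := by linarith [hE₁.1]
          have hAu : deriv κinv u < 0 := hκinv'neg u ⟨lt_trans he.1 hu.1, by linarith [hE32]⟩
          have hw2pos : 0 < w2 u :=
            inv_pos.mpr (mul_pos (mul_pos two_pos (Real.sqrt_pos.mpr h0)) h0)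
          have hw2le : w2 u ≤ W := by
            have hEu : ℰ/2 ≤ E₁ - u := by linarith [hE₁.1]
            have hs1 : Real.sqrt (ℰ/2) ≤ Real.sqrt (E₁ - u) := Real.sqrt_le_sqrt hEu
            have hmm : Real.sqrt (ℰ/2) * (ℰ/2) ≤ Real.sqrt (E₁ - u) * (E₁ - u) :=
              mul_le_mul hs1 hEu (by linarith) (Real.sqrt_nonneg _)
            show (2 * Real.sqrt (E₁ - u) * (E₁ - u))⁻¹ ≤ (2 * Real.sqrt (ℰ/2) * (ℰ/2))⁻¹
            apply inv_anti₀ (mul_pos (mul_pos two_pos hsqpos) (by linarith : (0:ℝ) < ℰ/2))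
            linarith
          rw [Real.norm_eq_abs, abs_mul, abs_of_pos hw2pos, abs_of_neg hAu]
          calc w2 u * -deriv κinv u ≤ W * -deriv κinv u :=
                mul_le_mul_of_nonneg_right hw2le (by linarith)
            _ = -deriv κinv u * W := mul_comm _ _
        have h := intervalIntegral.norm_integral_le_abs_of_norm_le haeb hgint
        have hveq : ∫ u in e..b, -(deriv κinv u) * W = (κinv e - κinv b) * W := by
          rw [intervalIntegral.integral_mul_const, intervalIntegral.integral_neg, hFTC]; ring
        rw [Real.norm_eq_abs, hveq] at h
        have h1e : κinv e ≤ 1 := (hκinv_right e ⟨he.1.le, by linarith [heκ.2]⟩).2.2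
        have h0b : 0 ≤ κinv b := (hκinv_right b ⟨hbpos.le, by linarith [hE32]⟩).2.1
        have h0e : 0 ≤ κinv e := (hκinv_right e ⟨he.1.le, by linarith [heκ.2]⟩).2.1
        have h1b : κinv b ≤ 1 := (hκinv_right b ⟨hbpos.le, by linarith [hE32]⟩).2.2
        calc |∫ x in e..b, w2 x * deriv κinv x| ≤ |(κinv e - κinv b) * W| := h
          _ = |κinv e - κinv b| * W := by rw [abs_mul, abs_of_nonneg hWnn]
          _ ≤ 1 * W := mul_le_mul_of_nonneg_right (abs_le.mpr ⟨by linarith, by linarith⟩) hWnn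
          _ = W := one_mul W
      have hI1 : |∫ u in e..b, f u| ≤ M * s + W + |deriv κinv e| * s := by
        rw [hI1eq, hibp]
        have t1 : |w b * deriv κinv b| ≤ s * M := by
          rw [abs_mul]
          exact mul_le_mul (hwble b Set.right_mem_uIcc) hAb (abs_nonneg _) hsnn
        have t2 : |w e * deriv κinv e| ≤ s * |deriv κinv e| := by
          rw [abs_mul]
          exact mul_le_mul_of_nonneg_right (hwble e Set.left_mem_uIcc) (abs_nonneg _)
        calc |w b * deriv κinv b - w e * deriv κinv e - ∫ x in e..b, w2 x * deriv κinv x|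
            ≤ |w b * deriv κinv b| + |w e * deriv κinv e|
              + |∫ x in e..b, w2 x * deriv κinv x| := tri _ _ _
          _ ≤ M * s + W + |deriv κinv e| * s := by linarith
      have hfint_eb : IntervalIntegrable f volume e b := by
        apply ContinuousOn.intervalIntegrable
        apply ContinuousOn.div (hA2cont.mono hsub)
        · exact (Real.continuous_sqrt.comp (continuous_const.sub continuous_id)).continuousOn
        · intro u hu
          exact ne_of_gt (Real.sqrt_pos.mpr (lt_of_lt_of_le (by linarith) (hposu u hu)))
      obtain ⟨hint2, hbound2⟩ := hmain b (le_refl _) hbE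
      have hsplit : ∫ u in e..E₁, f u = (∫ u in e..b, f u) + ∫ u in b..E₁, f u :=
        (intervalIntegral.integral_add_adjacent_intervals hfint_eb hint2).symm
      rw [hsplit]
      calc |(∫ u in e..b, f u) + ∫ u in b..E₁, f u|
          ≤ |∫ u in e..b, f u| + |∫ u in b..E₁, f u| := abs_add_le _ _
        _ ≤ 2*L*Real.sqrt κ0 + M*s + W + |deriv κinv e| * s := by linarith
  have h1m : |1 / deriv κinv e| ≤ 1/m := by
    rw [abs_div, abs_one]
    exact one_div_le_one_div_of_le hmpos habsm
  have hinv1 : |1 / deriv κinv e| * |deriv κinv e| = 1 := by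
    rw [← abs_mul, one_div, inv_mul_cancel₀ hAene, abs_one]
  calc |(1 / deriv κinv e) * ∫ u in e..E₁, f u|
      = |1 / deriv κinv e| * |∫ u in e..E₁, f u| := abs_mul _ _
    _ ≤ |1 / deriv κinv e| * (2*L*Real.sqrt κ0 + M*s + W + |deriv κinv e| * s) :=
        mul_le_mul_of_nonneg_left hkey (abs_nonneg _)
    _ = |1 / deriv κinv e| * (2*L*Real.sqrt κ0 + M*s + W)
        + (|1 / deriv κinv e| * |deriv κinv e|) * s := by ring
    _ ≤ (1/m) * (2*L*Real.sqrt κ0 + M*s + W) + 1 * s := by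
        rw [hinv1]
        have := mul_le_mul_of_nonneg_right h1m hC0nn
        linarith
    _ = (2*L*Real.sqrt κ0 + M*s + W)/m + s := by ring
end

section
/- Integral bound on the interaction forces along soft-core orbits (Lemma `1d_smooth_intbound`): Consider the soft-core piston system with one gas particle on each side (n₁ = n₂ = 1). There exist δ₀ > 0, ε₀ > 0, and C > 0 (depending only on κ, m₁, m₂, and 𝒱) such that: for every δ ∈ (0, δ₀], every ε ∈ (0, ε₀], every solution (Q, W, q₁, v₁, q₂, v₂) of the soft-core ODE, and all times 𝒯' ≤ 𝒯 such that the slow variables h(s) = (Q(s), W(s), E₁(s), E₂(s)) lie in 𝒱 for all s ∈ [𝒯', 𝒯], one has ∫_{𝒯'}^{𝒯} ( |κ_δ'(Q(s) − q₁(s))| + |κ_δ'(q₂(s) − Q(s))| ) ds ≤ C·max(1, 𝒯 − 𝒯'). -/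
open Set

set_option maxHeartbeats 1000000 in
/-- Auxiliary: integral bound for one particle bouncing between two slowly-moving walls. -/
lemma particle_intbound
    (κ : ℝ → ℝ) (hκd : Differentiable ℝ κ) (hκc : Continuous (deriv κ))
    (hκ'np : ∀ x : ℝ, deriv κ x ≤ 0) (hκ'1 : ∀ x : ℝ, 1 ≤ x → deriv κ x = 0)
    (m c E R : ℝ) (hm : 0 < m) (hc : 0 < c) (hE : 1 ≤ E) (hR : 0 ≤ R)
    (δ ε : ℝ) (hδ : 0 < δ) (hδc : δ ≤ c / 4) (hε1 : ε ≤ 1) (hε0 : 0 < ε)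
    (q v ℓ r wl wr : ℝ → ℝ) (T' T : ℝ) (hT : T' ≤ T)
    (hq : ∀ s ∈ Icc T' T, HasDerivAt q (v s) s)
    (hv : ∀ s ∈ Icc T' T, HasDerivAt v
      ((-(deriv κ ((q s - ℓ s) / δ) / δ) + deriv κ ((r s - q s) / δ) / δ) / m) s)
    (hl : ∀ s ∈ Icc T' T, HasDerivAt ℓ (ε * wl s) s)
    (hr : ∀ s ∈ Icc T' T, HasDerivAt r (ε * wr s) s)
    (hwlc : ContinuousOn wl (Icc T' T)) (hwrc : ContinuousOn wr (Icc T' T))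
    (hwl : ∀ s ∈ Icc T' T, |wl s| ≤ R) (hwr : ∀ s ∈ Icc T' T, |wr s| ≤ R)
    (hlen1 : ∀ s ∈ Icc T' T, c ≤ r s - ℓ s) (hlen2 : ∀ s ∈ Icc T' T, r s - ℓ s ≤ 1)
    (hqa : ∀ s ∈ Icc T' T, 0 ≤ q s - ℓ s) (hqb : ∀ s ∈ Icc T' T, 0 ≤ r s - q s)
    (hen : ∀ s ∈ Icc T' T, m * (v s) ^ 2 ≤ 2 * E) :
    ∫ s in T'..T, (|deriv κ ((q s - ℓ s) / δ) / δ| + |deriv κ ((r s - q s) / δ) / δ|)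
      ≤ ((4 / c) * (2 * E + m * Real.sqrt (2 * E / m) * R + 2 * m * Real.sqrt (2 * E / m)))
        * max 1 (T - T') := by
  set vm : ℝ := Real.sqrt (2 * E / m) with hvm
  have hvm0 : 0 ≤ vm := Real.sqrt_nonneg _
  -- speed bound
  have hvb : ∀ s ∈ Icc T' T, |v s| ≤ vm := by
    intro s hs
    have h1 : (v s) ^ 2 ≤ 2 * E / m := by
      rw [le_div_iff₀ hm]; nlinarith [hen s hs]
    calc |v s| = Real.sqrt ((v s) ^ 2) := by rw [Real.sqrt_sq_eq_abs]
      _ ≤ vm := Real.sqrt_le_sqrt h1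
  -- forces
  set A : ℝ → ℝ := fun s => deriv κ ((q s - ℓ s) / δ) / δ with hA
  set B : ℝ → ℝ := fun s => deriv κ ((r s - q s) / δ) / δ with hB
  have hAnp : ∀ s, A s ≤ 0 := fun s => div_nonpos_of_nonpos_of_nonneg (hκ'np _) hδ.le
  have hBnp : ∀ s, B s ≤ 0 := fun s => div_nonpos_of_nonpos_of_nonneg (hκ'np _) hδ.le
  -- support of the forces
  have hAsupp : ∀ s ∈ Icc T' T, A s ≠ 0 → q s - ℓ s < δ := by
    intro s hs hne
    by_contra hge
    push_neg at hge
    have h1 : (1:ℝ) ≤ (q s - ℓ s) / δ := (le_div_iff₀ hδ).2 (by linarith)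
    exact hne (by simp only [hA]; rw [hκ'1 _ h1, zero_div])
  have hBsupp : ∀ s ∈ Icc T' T, B s ≠ 0 → r s - q s < δ := by
    intro s hs hne
    by_contra hge
    push_neg at hge
    have h1 : (1:ℝ) ≤ (r s - q s) / δ := (le_div_iff₀ hδ).2 (by linarith)
    exact hne (by simp only [hB]; rw [hκ'1 _ h1, zero_div])
  -- continuity
  have hqc : ContinuousOn q (Icc T' T) := fun s hs => ((hq s hs).continuousAt).continuousWithinAt
  have hvc : ContinuousOn v (Icc T' T) := fun s hs => ((hv s hs).continuousAt).continuousWithinAt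
  have hlc : ContinuousOn ℓ (Icc T' T) := fun s hs => ((hl s hs).continuousAt).continuousWithinAt
  have hrc : ContinuousOn r (Icc T' T) := fun s hs => ((hr s hs).continuousAt).continuousWithinAt
  have hAc : ContinuousOn A (Icc T' T) :=
    ((hκc.comp_continuousOn ((hqc.sub hlc).div_const δ)).div_const δ)
  have hBc : ContinuousOn B (Icc T' T) :=
    ((hκc.comp_continuousOn ((hrc.sub hqc).div_const δ)).div_const δ)
  have huIcc : uIcc T' T = Icc T' T := uIcc_of_le hT
  have hint : ∀ {f : ℝ → ℝ}, ContinuousOn f (Icc T' T) →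
      IntervalIntegrable f MeasureTheory.volume T' T :=
    fun {f} hf => hf.intervalIntegrable_of_Icc hT
  -- the two main integrals
  set IA : ℝ := ∫ s in T'..T, -A s with hIA
  set IB : ℝ := ∫ s in T'..T, -B s with hIB
  have hIA0 : 0 ≤ IA :=
    intervalIntegral.integral_nonneg hT (fun s _ => by linarith [hAnp s])
  have hIB0 : 0 ≤ IB :=
    intervalIntegral.integral_nonneg hT (fun s _ => by linarith [hBnp s])
  -- common ingredients
  have hmv2 : ∫ s in T'..T, m * (v s) ^ 2 ≤ 2 * E * (T - T') := by
    calc ∫ s in T'..T, m * (v s) ^ 2 ≤ ∫ _s in T'..T, 2 * E :=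
          intervalIntegral.integral_mono_on hT
            (hint (by fun_prop)) (hint (by fun_prop)) hen
      _ = (T - T') * (2 * E) := by simp [intervalIntegral.integral_const]; ring
      _ = 2 * E * (T - T') := by ring
  have hmv20 : 0 ≤ ∫ s in T'..T, m * (v s) ^ 2 :=
    intervalIntegral.integral_nonneg hT (fun s _ => by positivity)
  -- FTC with weight (q - ℓ)
  have key1 : (c - δ) * IB ≤ δ * IA + 2 * E * (T - T') + m * vm * R * (T - T') + 2 * (m * vm) := by
    set g : ℝ → ℝ := fun s => m * v s * (q s - ℓ s) with hg
    set g' : ℝ → ℝ := fun s =>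
      (-A s + B s) * (q s - ℓ s) + m * v s * (v s - ε * wl s) with hg'
    have hgd : ∀ s ∈ uIcc T' T, HasDerivAt g (g' s) s := by
      intro s hs
      rw [huIcc] at hs
      have h1 := (((hv s hs).const_mul m).mul ((hq s hs).sub (hl s hs)))
      convert h1 using 1
      · rfl
      · rfl
      · rfl
      show (-(deriv κ ((q s - ℓ s) / δ) / δ) + deriv κ ((r s - q s) / δ) / δ) * (q s - ℓ s) + m * v s * (v s - ε * wl s) = _
      rw [Pi.sub_apply, mul_div_cancel₀ _ hm.ne']
    have hg'c : ContinuousOn g' (Icc T' T) := by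
      apply ContinuousOn.add
      · exact (((hAc.neg).add hBc).mul (hqc.sub hlc))
      · exact ((continuousOn_const.mul hvc).mul (hvc.sub (continuousOn_const.mul hwlc)))
    have hftc : ∫ s in T'..T, g' s = g T - g T' :=
      intervalIntegral.integral_eq_sub_of_hasDerivAt hgd (hint hg'c)
    -- split the integral
    have hsplit : ∫ s in T'..T, g' s =
        (∫ s in T'..T, (q s - ℓ s) * (-A s)) - (∫ s in T'..T, (q s - ℓ s) * (-B s))
        + (∫ s in T'..T, m * (v s) ^ 2) - ∫ s in T'..T, ε * (m * v s * wl s) := by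
      rw [← intervalIntegral.integral_sub, ← intervalIntegral.integral_add,
        ← intervalIntegral.integral_sub]
      · apply intervalIntegral.integral_congr
        intro s _
        simp only [hg']
        ring
      all_goals
        first
        | exact hint (((hqc.sub hlc).mul (hAc.neg)))
        | exact hint (((hqc.sub hlc).mul (hBc.neg)))
        | exact hint ((((hqc.sub hlc).mul (hAc.neg)).sub ((hqc.sub hlc).mul (hBc.neg))))
        | exact hint (by fun_prop)
        | exact hint (((((hqc.sub hlc).mul (hAc.neg)).sub ((hqc.sub hlc).mul (hBc.neg))).add
            (by fun_prop : ContinuousOn (fun s => m * (v s)^2) (Icc T' T))))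
    -- pointwise comparisons
    have hlow : (c - δ) * IB ≤ ∫ s in T'..T, (q s - ℓ s) * (-B s) := by
      rw [hIB, ← intervalIntegral.integral_const_mul]
      apply intervalIntegral.integral_mono_on hT (hint (by exact continuousOn_const.mul hBc.neg))
        (hint ((hqc.sub hlc).mul hBc.neg))
      intro s hs
      rcases eq_or_ne (B s) 0 with h0 | h0
      · simp [h0]
      · have h1 : r s - q s < δ := hBsupp s hs h0
        have h2 : c - δ ≤ q s - ℓ s := by linarith [hlen1 s hs]
        have h3 : 0 ≤ -B s := by linarith [hBnp s]
        exact mul_le_mul_of_nonneg_right h2 h3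
    have hup : ∫ s in T'..T, (q s - ℓ s) * (-A s) ≤ δ * IA := by
      rw [hIA, ← intervalIntegral.integral_const_mul]
      apply intervalIntegral.integral_mono_on hT (hint ((hqc.sub hlc).mul hAc.neg))
        (hint (continuousOn_const.mul hAc.neg))
      intro s hs
      rcases eq_or_ne (A s) 0 with h0 | h0
      · simp [h0]
      · have h1 : q s - ℓ s < δ := hAsupp s hs h0
        have h3 : 0 ≤ -A s := by linarith [hAnp s]
        exact mul_le_mul_of_nonneg_right h1.le h3
    have hwork : |∫ s in T'..T, ε * (m * v s * wl s)| ≤ m * vm * R * (T - T') := by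
      have := intervalIntegral.norm_integral_le_of_norm_le_const
        (C := m * vm * R) (f := fun s => ε * (m * v s * wl s)) (a := T') (b := T) ?_
      · rwa [Real.norm_eq_abs, abs_of_nonneg (show (0:ℝ) ≤ T - T' by linarith)] at this
      · intro x hx
        have hx' : x ∈ Icc T' T := mem_Icc_of_Ioc (by rwa [uIoc_of_le hT] at hx)
        rw [Real.norm_eq_abs, abs_mul, abs_mul, abs_mul, abs_of_pos hε0, abs_of_pos hm]
        calc ε * (m * |v x| * |wl x|) ≤ 1 * (m * vm * R) := by
              apply mul_le_mul hε1 ?_ (by positivity) zero_le_one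
              exact mul_le_mul (mul_le_mul_of_nonneg_left (hvb x hx') hm.le) (hwl x hx')
                (abs_nonneg _) (by positivity)
          _ = m * vm * R := one_mul _
    have hbnd : ∀ s ∈ Icc T' T, |g s| ≤ m * vm := by
      intro s hs
      simp only [hg, abs_mul, abs_of_pos hm]
      have h1 : |q s - ℓ s| ≤ 1 := by
        rw [abs_of_nonneg (hqa s hs)]
        linarith [hqb s hs, hlen2 s hs]
      calc m * |v s| * |q s - ℓ s| ≤ m * vm * 1 :=
            mul_le_mul (mul_le_mul_of_nonneg_left (hvb s hs) hm.le) h1 (abs_nonneg _)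
              (by positivity)
        _ = m * vm := mul_one _
    have hT'mem : T' ∈ Icc T' T := ⟨le_refl _, hT⟩
    have hTmem : T ∈ Icc T' T := ⟨hT, le_refl _⟩
    have h1 := hbnd T' hT'mem
    have h2 := hbnd T hTmem
    have h3 := abs_le.1 h1
    have h4 := abs_le.1 h2
    have h5 := abs_le.1 hwork
    -- combine: (q-ℓ)(-B) integral = (q-ℓ)(-A) + mv² - work - Δg
    nlinarith [hlow, hup, hmv2, hsplit, hftc]
  -- FTC with weight (r - q)
  have key2 : (c - δ) * IA ≤ δ * IB + 2 * E * (T - T') + m * vm * R * (T - T') + 2 * (m * vm) := by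
    set g : ℝ → ℝ := fun s => m * v s * (r s - q s) with hg
    set g' : ℝ → ℝ := fun s =>
      (-A s + B s) * (r s - q s) + m * v s * (ε * wr s - v s) with hg'
    have hgd : ∀ s ∈ uIcc T' T, HasDerivAt g (g' s) s := by
      intro s hs
      rw [huIcc] at hs
      have h1 := (((hv s hs).const_mul m).mul ((hr s hs).sub (hq s hs)))
      convert h1 using 1
      · rfl
      · rfl
      · rfl
      show (-(deriv κ ((q s - ℓ s) / δ) / δ) + deriv κ ((r s - q s) / δ) / δ) * (r s - q s) + m * v s * (ε * wr s - v s) = _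
      rw [Pi.sub_apply, mul_div_cancel₀ _ hm.ne']
    have hg'c : ContinuousOn g' (Icc T' T) := by
      apply ContinuousOn.add
      · exact (((hAc.neg).add hBc).mul (hrc.sub hqc))
      · exact ((continuousOn_const.mul hvc).mul ((continuousOn_const.mul hwrc).sub hvc))
    have hftc : ∫ s in T'..T, g' s = g T - g T' :=
      intervalIntegral.integral_eq_sub_of_hasDerivAt hgd (hint hg'c)
    have hsplit : ∫ s in T'..T, g' s =
        (∫ s in T'..T, (r s - q s) * (-A s)) - (∫ s in T'..T, (r s - q s) * (-B s))
        - (∫ s in T'..T, m * (v s) ^ 2) + ∫ s in T'..T, ε * (m * v s * wr s) := by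
      rw [← intervalIntegral.integral_sub, ← intervalIntegral.integral_sub,
        ← intervalIntegral.integral_add]
      · apply intervalIntegral.integral_congr
        intro s _
        simp only [hg']
        ring
      all_goals
        first
        | exact hint (((hrc.sub hqc).mul (hAc.neg)))
        | exact hint (((hrc.sub hqc).mul (hBc.neg)))
        | exact hint ((((hrc.sub hqc).mul (hAc.neg)).sub ((hrc.sub hqc).mul (hBc.neg))))
        | exact hint (by fun_prop)
        | exact hint (((((hrc.sub hqc).mul (hAc.neg)).sub ((hrc.sub hqc).mul (hBc.neg))).sub
            (by fun_prop : ContinuousOn (fun s => m * (v s)^2) (Icc T' T))))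
    have hlow : (c - δ) * IA ≤ ∫ s in T'..T, (r s - q s) * (-A s) := by
      rw [hIA, ← intervalIntegral.integral_const_mul]
      apply intervalIntegral.integral_mono_on hT (hint (continuousOn_const.mul hAc.neg))
        (hint ((hrc.sub hqc).mul hAc.neg))
      intro s hs
      rcases eq_or_ne (A s) 0 with h0 | h0
      · simp [h0]
      · have h1 : q s - ℓ s < δ := hAsupp s hs h0
        have h2 : c - δ ≤ r s - q s := by linarith [hlen1 s hs]
        have h3 : 0 ≤ -A s := by linarith [hAnp s]
        exact mul_le_mul_of_nonneg_right h2 h3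
    have hup : ∫ s in T'..T, (r s - q s) * (-B s) ≤ δ * IB := by
      rw [hIB, ← intervalIntegral.integral_const_mul]
      apply intervalIntegral.integral_mono_on hT (hint ((hrc.sub hqc).mul hBc.neg))
        (hint (continuousOn_const.mul hBc.neg))
      intro s hs
      rcases eq_or_ne (B s) 0 with h0 | h0
      · simp [h0]
      · have h1 : r s - q s < δ := hBsupp s hs h0
        have h3 : 0 ≤ -B s := by linarith [hBnp s]
        exact mul_le_mul_of_nonneg_right h1.le h3
    have hwork : |∫ s in T'..T, ε * (m * v s * wr s)| ≤ m * vm * R * (T - T') := by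
      have := intervalIntegral.norm_integral_le_of_norm_le_const
        (C := m * vm * R) (f := fun s => ε * (m * v s * wr s)) (a := T') (b := T) ?_
      · rwa [Real.norm_eq_abs, abs_of_nonneg (show (0:ℝ) ≤ T - T' by linarith)] at this
      · intro x hx
        have hx' : x ∈ Icc T' T := mem_Icc_of_Ioc (by rwa [uIoc_of_le hT] at hx)
        rw [Real.norm_eq_abs, abs_mul, abs_mul, abs_mul, abs_of_pos hε0, abs_of_pos hm]
        calc ε * (m * |v x| * |wr x|) ≤ 1 * (m * vm * R) := by
              apply mul_le_mul hε1 ?_ (by positivity) zero_le_one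
              exact mul_le_mul (mul_le_mul_of_nonneg_left (hvb x hx') hm.le) (hwr x hx')
                (abs_nonneg _) (by positivity)
          _ = m * vm * R := one_mul _
    have hbnd : ∀ s ∈ Icc T' T, |g s| ≤ m * vm := by
      intro s hs
      simp only [hg, abs_mul, abs_of_pos hm]
      have h1 : |r s - q s| ≤ 1 := by
        rw [abs_of_nonneg (hqb s hs)]
        linarith [hqa s hs, hlen2 s hs]
      calc m * |v s| * |r s - q s| ≤ m * vm * 1 :=
            mul_le_mul (mul_le_mul_of_nonneg_left (hvb s hs) hm.le) h1 (abs_nonneg _)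
              (by positivity)
        _ = m * vm := mul_one _
    have h1 := abs_le.1 (hbnd T' ⟨le_refl _, hT⟩)
    have h2 := abs_le.1 (hbnd T ⟨hT, le_refl _⟩)
    have h5 := abs_le.1 hwork
    nlinarith [hlow, hup, hmv2, hsplit, hftc]
  -- combine the two
  have hΔT : 0 ≤ T - T' := by linarith
  have hmax1 : (1:ℝ) ≤ max 1 (T - T') := le_max_left _ _
  have hmaxT : T - T' ≤ max 1 (T - T') := le_max_right _ _
  have hcδ : c / 2 ≤ c - 2 * δ := by linarith
  have hsum : (c / 2) * (IA + IB) ≤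
      2 * (2 * E * (T - T') + m * vm * R * (T - T') + 2 * (m * vm)) := by
    nlinarith [key1, key2, hIA0, hIB0]
  have hfin : IA + IB ≤
      ((4 / c) * (2 * E + m * vm * R + 2 * m * vm)) * max 1 (T - T') := by
    have hP : 2 * E * (T - T') + m * vm * R * (T - T') + 2 * (m * vm) ≤
        (2 * E + m * vm * R + 2 * m * vm) * max 1 (T - T') := by
      have h1 : 2 * E * (T - T') ≤ 2 * E * max 1 (T - T') :=
        mul_le_mul_of_nonneg_left hmaxT (by linarith)
      have h2 : m * vm * R * (T - T') ≤ m * vm * R * max 1 (T - T') :=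
        mul_le_mul_of_nonneg_left hmaxT (by positivity)
      have h3 : 2 * (m * vm) ≤ 2 * m * vm * max 1 (T - T') := by
        have h4 : 2 * m * vm * 1 ≤ 2 * m * vm * max 1 (T - T') :=
          mul_le_mul_of_nonneg_left hmax1 (by positivity)
        linarith
      nlinarith [h1, h2, h3]
    have step : c * (IA + IB) ≤
        4 * ((2 * E + m * vm * R + 2 * m * vm) * max 1 (T - T')) := by
      linarith [hsum, hP]
    calc IA + IB = c * (IA + IB) / c := by field_simp
      _ ≤ 4 * ((2 * E + m * vm * R + 2 * m * vm) * max 1 (T - T')) / c := by gcongr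
      _ = ((4 / c) * (2 * E + m * vm * R + 2 * m * vm)) * max 1 (T - T') := by ring
  calc ∫ s in T'..T, (|deriv κ ((q s - ℓ s) / δ) / δ| + |deriv κ ((r s - q s) / δ) / δ|)
      = IA + IB := by
        rw [hIA, hIB, ← intervalIntegral.integral_add (f := fun s => -A s) (g := fun s => -B s) (hint hAc.neg) (hint hBc.neg)]
        apply intervalIntegral.integral_congr
        intro s _
        show |A s| + |B s| = -A s + -B s
        rw [abs_of_nonpos (hAnp s), abs_of_nonpos (hBnp s)]
    _ ≤ _ := hfin

set_option maxHeartbeats 1000000 in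
/-- **Lemma (Integral bound on the interaction forces along soft-core orbits).**
For the soft-core piston with one gas particle on each side, there are `δ₀, ε₀, C > 0`
such that for all `δ ∈ (0,δ₀]`, `ε ∈ (0,ε₀]`, every solution of the soft-core equations
and all times `𝒯' ≤ 𝒯` during which the slow variables remain in `𝒱`, the integral of
`|κ_δ'(Q−q₁)| + |κ_δ'(q₂−Q)|` over `[𝒯',𝒯]` is at most `C·max(1, 𝒯−𝒯')`. -/
theorem one_d_smooth_intbound
    (κ : ℝ → ℝ) (hκC2 : ContDiff ℝ 2 κ)
    (hκ0 : ∀ x : ℝ, 1 ≤ x → κ x = 0) (hκ'neg : ∀ x : ℝ, x < 1 → deriv κ x < 0)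
    (m₁ m₂ : ℝ) (hm₁ : 0 < m₁) (hm₂ : 0 < m₂)
    (𝒱 : Set (ℝ × ℝ × ℝ × ℝ)) (h𝒱 : IsCompact 𝒱)
    (a b e₁ e₂ : ℝ) (ha : 0 < a) (hb : b < 1) (he₁ : 0 < e₁) (he₂ : e₂ < κ 0)
    (h𝒱Q : ∀ h ∈ 𝒱, h.1 ∈ Set.Icc a b)
    (h𝒱E : ∀ h ∈ 𝒱, h.2.2.1 ∈ Set.Icc e₁ e₂ ∧ h.2.2.2 ∈ Set.Icc e₁ e₂) :
    ∃ δ₀ > (0:ℝ), ∃ ε₀ > (0:ℝ), ∃ C > (0:ℝ),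
      ∀ δ ∈ Set.Ioc (0:ℝ) δ₀, ∀ ε ∈ Set.Ioc (0:ℝ) ε₀,
      ∀ Q W q₁ v₁ q₂ v₂ : ℝ → ℝ, ∀ 𝒯' 𝒯 : ℝ, 𝒯' ≤ 𝒯 →
      (∀ s ∈ Set.Icc 𝒯' 𝒯,
        HasDerivAt Q (ε * W s) s ∧
        HasDerivAt W (ε * (-(deriv κ ((Q s - q₁ s) / δ) / δ)
          + deriv κ ((q₂ s - Q s) / δ) / δ)) s ∧
        HasDerivAt q₁ (v₁ s) s ∧
        HasDerivAt v₁ ((-(deriv κ (q₁ s / δ) / δ)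
          + deriv κ ((Q s - q₁ s) / δ) / δ) / m₁) s ∧
        HasDerivAt q₂ (v₂ s) s ∧
        HasDerivAt v₂ ((-(deriv κ ((q₂ s - Q s) / δ) / δ)
          + deriv κ ((1 - q₂ s) / δ) / δ) / m₂) s) →
      (∀ s ∈ Set.Icc 𝒯' 𝒯,
        (Q s, W s,
         m₁ * (v₁ s)^2 / 2 + κ (q₁ s / δ) + κ ((Q s - q₁ s) / δ),
         m₂ * (v₂ s)^2 / 2 + κ ((q₂ s - Q s) / δ) + κ ((1 - q₂ s) / δ)) ∈ 𝒱) →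
      (∫ s in 𝒯'..𝒯,
          (|deriv κ ((Q s - q₁ s) / δ) / δ| + |deriv κ ((q₂ s - Q s) / δ) / δ|))
        ≤ C * max 1 (𝒯 - 𝒯') := by
  -- basic facts about κ
  have hκd : Differentiable ℝ κ := hκC2.differentiable (by norm_num)
  have hκc : Continuous (deriv κ) := hκC2.continuous_deriv (by norm_num)
  have hκ'1 : ∀ x : ℝ, 1 ≤ x → deriv κ x = 0 := by
    have hgt : ∀ x : ℝ, 1 < x → deriv κ x = 0 := by
      intro x hx
      have hev : κ =ᶠ[nhds x] fun _ => 0 :=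
        Filter.eventuallyEq_of_mem (Ioi_mem_nhds hx) (fun y hy => hκ0 y (le_of_lt hy))
      rw [hev.deriv_eq, deriv_const]
    intro x hx
    rcases eq_or_lt_of_le hx with h | h
    · rw [← h]
      have h1 : Filter.Tendsto (deriv κ) (nhdsWithin 1 (Ioi (1:ℝ))) (nhds (deriv κ 1)) :=
        (hκc.tendsto 1).mono_left nhdsWithin_le_nhds
      have h2 : Filter.Tendsto (deriv κ) (nhdsWithin 1 (Ioi (1:ℝ))) (nhds 0) := by
        apply Filter.Tendsto.congr' _ tendsto_const_nhds
        exact (eventually_nhdsWithin_of_forall (fun y hy => (hgt y hy).symm))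
      exact tendsto_nhds_unique h1 h2
    · exact hgt x h
  have hκ'np : ∀ x : ℝ, deriv κ x ≤ 0 := by
    intro x
    rcases lt_or_ge x 1 with h | h
    · exact (hκ'neg x h).le
    · exact (hκ'1 x h).le
  have hκanti : Antitone κ := antitone_of_deriv_nonpos hκd hκ'np
  have hκnn : ∀ x : ℝ, 0 ≤ κ x := by
    intro x
    rcases le_or_gt 1 x with h | h
    · exact (hκ0 x h).ge
    · rw [← hκ0 1 le_rfl]; exact hκanti h.le
  have hκpos : ∀ y : ℝ, κ y ≤ e₂ → 0 < y := by
    intro y hy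
    by_contra hle
    push_neg at hle
    exact absurd (le_trans (hκanti hle) hy) (not_le.2 he₂)
  -- bound on the compact set
  obtain ⟨rad, hrad⟩ := h𝒱.isBounded.subset_closedBall 0
  -- constants
  set c : ℝ := min a (1 - b) with hc_def
  have hc : 0 < c := lt_min ha (by linarith)
  set R : ℝ := max rad 0 with hR_def
  have hR : 0 ≤ R := le_max_right _ _
  set E : ℝ := max e₂ 1 with hE_def
  have hE : 1 ≤ E := le_max_right _ _
  set K₁ : ℝ := (4 / c) * (2 * E + m₁ * Real.sqrt (2 * E / m₁) * R
    + 2 * m₁ * Real.sqrt (2 * E / m₁)) with hK₁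
  set K₂ : ℝ := (4 / c) * (2 * E + m₂ * Real.sqrt (2 * E / m₂) * R
    + 2 * m₂ * Real.sqrt (2 * E / m₂)) with hK₂
  have hK₁0 : 0 < K₁ := by
    have h1 : 0 < 4 / c := by positivity
    have h2 : 0 ≤ m₁ * Real.sqrt (2 * E / m₁) * R := by positivity
    have h3 : 0 ≤ 2 * m₁ * Real.sqrt (2 * E / m₁) := by positivity
    have h4 : (0:ℝ) < 2 * E + m₁ * Real.sqrt (2 * E / m₁) * R
        + 2 * m₁ * Real.sqrt (2 * E / m₁) := by nlinarith
    exact mul_pos h1 h4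
  have hK₂0 : 0 < K₂ := by
    have h1 : 0 < 4 / c := by positivity
    have h2 : 0 ≤ m₂ * Real.sqrt (2 * E / m₂) * R := by positivity
    have h3 : 0 ≤ 2 * m₂ * Real.sqrt (2 * E / m₂) := by positivity
    have h4 : (0:ℝ) < 2 * E + m₂ * Real.sqrt (2 * E / m₂) * R
        + 2 * m₂ * Real.sqrt (2 * E / m₂) := by nlinarith
    exact mul_pos h1 h4
  refine ⟨c / 4, by positivity, 1, one_pos, K₁ + K₂, by positivity, ?_⟩
  rintro δ ⟨hδ0, hδc⟩ ε ⟨hε0, hε1⟩ Q W q₁ v₁ q₂ v₂ T' T hT hode hmem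
  have he₂E : e₂ ≤ E := le_max_left _ _
  -- slow variables bounds
  have hWb : ∀ s ∈ Set.Icc T' T, |W s| ≤ R := by
    intro s hs
    have h1 := hrad (hmem s hs)
    rw [Metric.mem_closedBall, dist_zero_right] at h1
    set x : ℝ × ℝ × ℝ × ℝ := (Q s, W s,
        m₁ * (v₁ s)^2 / 2 + κ (q₁ s / δ) + κ ((Q s - q₁ s) / δ),
        m₂ * (v₂ s)^2 / 2 + κ ((q₂ s - Q s) / δ) + κ ((1 - q₂ s) / δ)) with hx
    have hA : ‖x.2.1‖ ≤ ‖x.2‖ := norm_fst_le _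
    have hB : ‖x.2‖ ≤ ‖x‖ := norm_snd_le _
    have hx21 : ‖x.2.1‖ = |W s| := by rw [Real.norm_eq_abs]
    have hrR : rad ≤ R := le_max_left _ _
    rw [hx21] at hA
    linarith
  have hQab : ∀ s ∈ Set.Icc T' T, Q s ∈ Set.Icc a b := fun s hs => h𝒱Q _ (hmem s hs)
  have hE₁ : ∀ s ∈ Set.Icc T' T,
      m₁ * (v₁ s)^2 / 2 + κ (q₁ s / δ) + κ ((Q s - q₁ s) / δ) ≤ e₂ :=
    fun s hs => (h𝒱E _ (hmem s hs)).1.2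
  have hE₂ : ∀ s ∈ Set.Icc T' T,
      m₂ * (v₂ s)^2 / 2 + κ ((q₂ s - Q s) / δ) + κ ((1 - q₂ s) / δ) ≤ e₂ :=
    fun s hs => (h𝒱E _ (hmem s hs)).2.2
  -- derived pointwise facts
  have hposdiv : ∀ y : ℝ, 0 < y / δ → 0 < y := by
    intro y hy
    have := mul_pos hy hδ0
    rwa [div_mul_cancel₀ _ (ne_of_gt hδ0)] at this
  have hq₁pos : ∀ s ∈ Set.Icc T' T, 0 < q₁ s := by
    intro s hs
    have h0 : 0 ≤ m₁ * (v₁ s)^2 / 2 := by positivity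
    have h1 : κ (q₁ s / δ) ≤ e₂ := by
      have := hE₁ s hs; have := hκnn ((Q s - q₁ s) / δ); linarith
    exact hposdiv _ (hκpos _ h1)
  have hQq₁pos : ∀ s ∈ Set.Icc T' T, 0 < Q s - q₁ s := by
    intro s hs
    have h0 : 0 ≤ m₁ * (v₁ s)^2 / 2 := by positivity
    have h1 : κ ((Q s - q₁ s) / δ) ≤ e₂ := by
      have := hE₁ s hs; have := hκnn (q₁ s / δ); linarith
    exact hposdiv _ (hκpos _ h1)
  have hq₂Qpos : ∀ s ∈ Set.Icc T' T, 0 < q₂ s - Q s := by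
    intro s hs
    have h0 : 0 ≤ m₂ * (v₂ s)^2 / 2 := by positivity
    have h1 : κ ((q₂ s - Q s) / δ) ≤ e₂ := by
      have := hE₂ s hs; have := hκnn ((1 - q₂ s) / δ); linarith
    exact hposdiv _ (hκpos _ h1)
  have h1q₂pos : ∀ s ∈ Set.Icc T' T, 0 < 1 - q₂ s := by
    intro s hs
    have h0 : 0 ≤ m₂ * (v₂ s)^2 / 2 := by positivity
    have h1 : κ ((1 - q₂ s) / δ) ≤ e₂ := by
      have := hE₂ s hs; have := hκnn ((q₂ s - Q s) / δ); linarith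
    exact hposdiv _ (hκpos _ h1)
  have hen₁ : ∀ s ∈ Set.Icc T' T, m₁ * (v₁ s) ^ 2 ≤ 2 * E := by
    intro s hs
    have := hE₁ s hs
    have h1 := hκnn (q₁ s / δ); have h2 := hκnn ((Q s - q₁ s) / δ)
    linarith
  have hen₂ : ∀ s ∈ Set.Icc T' T, m₂ * (v₂ s) ^ 2 ≤ 2 * E := by
    intro s hs
    have := hE₂ s hs
    have h1 := hκnn ((q₂ s - Q s) / δ); have h2 := hκnn ((1 - q₂ s) / δ)
    linarith
  have hWc : ContinuousOn W (Set.Icc T' T) :=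
    fun s hs => ((hode s hs).2.1.continuousAt).continuousWithinAt
  -- particle 1
  have hP1 := particle_intbound κ hκd hκc hκ'np hκ'1 m₁ c E R hm₁ hc hE hR δ ε hδ0
    hδc hε1 hε0 q₁ v₁ (fun _ => 0) Q (fun _ => 0) W T' T hT
    (fun s hs => (hode s hs).2.2.1)
    (fun s hs => by simpa using (hode s hs).2.2.2.1)
    (fun s hs => by simpa using hasDerivAt_const s (0:ℝ))
    (fun s hs => (hode s hs).1)
    continuousOn_const hWc
    (fun s hs => by simpa using hR) hWb
    (fun s hs => by
      have := (hQab s hs).1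
      have hca : c ≤ a := min_le_left _ _
      simp only [sub_zero]; linarith)
    (fun s hs => by
      have := (hQab s hs).2
      simp only [sub_zero]; linarith)
    (fun s hs => by simp only [sub_zero]; exact (hq₁pos s hs).le)
    (fun s hs => (hQq₁pos s hs).le)
    hen₁
  -- particle 2
  have hP2 := particle_intbound κ hκd hκc hκ'np hκ'1 m₂ c E R hm₂ hc hE hR δ ε hδ0
    hδc hε1 hε0 q₂ v₂ Q (fun _ => 1) W (fun _ => 0) T' T hT
    (fun s hs => (hode s hs).2.2.2.2.1)
    (fun s hs => by simpa using (hode s hs).2.2.2.2.2)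
    (fun s hs => (hode s hs).1)
    (fun s hs => by simpa using hasDerivAt_const s (1:ℝ))
    hWc continuousOn_const
    hWb (fun s hs => by simpa using hR)
    (fun s hs => by
      have := (hQab s hs).2
      have hcb : c ≤ 1 - b := min_le_right _ _
      show c ≤ 1 - Q s
      linarith)
    (fun s hs => by
      have := (hQab s hs).1
      show 1 - Q s ≤ 1
      linarith)
    (fun s hs => (hq₂Qpos s hs).le)
    (fun s hs => (h1q₂pos s hs).le)
    hen₂
  -- combine
  have huIcc : Set.uIcc T' T = Set.Icc T' T := uIcc_of_le hT
  have hint : ∀ {f : ℝ → ℝ}, ContinuousOn f (Set.Icc T' T) →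
      IntervalIntegrable f MeasureTheory.volume T' T :=
    fun {f} hf => hf.intervalIntegrable_of_Icc hT
  have hQc : ContinuousOn Q (Set.Icc T' T) :=
    fun s hs => ((hode s hs).1.continuousAt).continuousWithinAt
  have hq₁c : ContinuousOn q₁ (Set.Icc T' T) :=
    fun s hs => ((hode s hs).2.2.1.continuousAt).continuousWithinAt
  have hq₂c : ContinuousOn q₂ (Set.Icc T' T) :=
    fun s hs => ((hode s hs).2.2.2.2.1.continuousAt).continuousWithinAt
  have hF : ∀ u v : ℝ → ℝ, ContinuousOn u (Set.Icc T' T) → ContinuousOn v (Set.Icc T' T) →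
      ContinuousOn (fun s => |deriv κ ((u s - v s) / δ) / δ|) (Set.Icc T' T) :=
    fun u v hu hv =>
      (((hκc.comp_continuousOn ((hu.sub hv).div_const δ)).div_const δ)).abs
  have hc1 := hF Q q₁ hQc hq₁c
  have hc2 := hF q₂ Q hq₂c hQc
  have hc0 : ContinuousOn (fun s => |deriv κ ((q₁ s - (fun _ : ℝ => (0:ℝ)) s) / δ) / δ|)
      (Set.Icc T' T) := hF q₁ (fun _ => 0) hq₁c continuousOn_const
  have hc3 : ContinuousOn (fun s => |deriv κ (((fun _ : ℝ => (1:ℝ)) s - q₂ s) / δ) / δ|)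
      (Set.Icc T' T) := hF (fun _ => 1) q₂ continuousOn_const hq₂c
  calc (∫ s in T'..T,
        (|deriv κ ((Q s - q₁ s) / δ) / δ| + |deriv κ ((q₂ s - Q s) / δ) / δ|))
      ≤ ∫ s in T'..T,
        ((|deriv κ ((q₁ s - (fun _ : ℝ => (0:ℝ)) s) / δ) / δ| + |deriv κ ((Q s - q₁ s) / δ) / δ|)
         + (|deriv κ ((q₂ s - Q s) / δ) / δ| + |deriv κ (((fun _ : ℝ => (1:ℝ)) s - q₂ s) / δ) / δ|)) := by
        apply intervalIntegral.integral_mono_on hT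
        · exact hint (hc1.add hc2)
        · exact hint ((hc0.add hc1).add (hc2.add hc3))
        · intro s _
          have h1 : 0 ≤ |deriv κ ((q₁ s - (fun _ : ℝ => (0:ℝ)) s) / δ) / δ| := abs_nonneg _
          have h2 : 0 ≤ |deriv κ (((fun _ : ℝ => (1:ℝ)) s - q₂ s) / δ) / δ| := abs_nonneg _
          linarith
    _ = (∫ s in T'..T,
          (|deriv κ ((q₁ s - (fun _ : ℝ => (0:ℝ)) s) / δ) / δ| + |deriv κ ((Q s - q₁ s) / δ) / δ|))
        + ∫ s in T'..T,
          (|deriv κ ((q₂ s - Q s) / δ) / δ| + |deriv κ (((fun _ : ℝ => (1:ℝ)) s - q₂ s) / δ) / δ|) :=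
        intervalIntegral.integral_add (hint (hc0.add hc1)) (hint (hc2.add hc3))
    _ ≤ K₁ * max 1 (T - T') + K₂ * max 1 (T - T') := add_le_add hP1 hP2
    _ = (K₁ + K₂) * max 1 (T - T') := by ring
end

section
/- Integral identity for induced transformations (Proposition `inducing`): Let (Ω, ℬ, ν) be a probability space and F : Ω → Ω an invertible, ergodic, ν-preserving transformation (F and F⁻¹ measurable). Let Ω̂ ∈ ℬ with 0 < ν(Ω̂) < 1, let R(ω) = inf{n ≥ 1 : Fⁿω ∈ Ω̂} be the first return time to Ω̂ (finite ν-a.e. on Ω̂), and let ν̂ = ν(· ∩ Ω̂)/ν(Ω̂). If ζ : Ω → [0,∞) is ν-integrable, then the induced function ζ̂ := Σ_{n=0}^{R−1} ζ∘Fⁿ, defined ν̂-a.e. on Ω̂, is ν̂-integrable, and ∫_{Ω̂} ζ̂ dν̂ = (1/ν(Ω̂)) · ∫_Ω ζ dν. -/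
open MeasureTheory Set Function
open scoped ENNReal

section InducingAux

variable {Ω : Type*} [MeasurableSpace Ω]

private lemma inducing_iter_symm (F : Ω ≃ᵐ Ω) {j n : ℕ} (h : j ≤ n) (x : Ω) :
    (⇑F)^[j] ((⇑F.symm)^[n] x) = (⇑F.symm)^[n - j] x := by
  conv_lhs => rw [← Nat.add_sub_cancel' h, Function.iterate_add_apply]
  exact (Function.LeftInverse.iterate F.apply_symm_apply j) _

private lemma inducing_symm_iter (F : Ω ≃ᵐ Ω) (n : ℕ) (x : Ω) :
    (⇑F.symm)^[n] ((⇑F)^[n] x) = x :=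
  (Function.LeftInverse.iterate F.symm_apply_apply n) x

private lemma inducing_meas_dep_nat {α : Type*} [MeasurableSpace α]
    {g : ℕ → Ω → α} (hg : ∀ n, Measurable (g n)) {R : Ω → ℕ}
    (hRm : Measurable R) : Measurable fun ω => g (R ω) ω := by
  intro s hs
  have h : (fun ω => g (R ω) ω) ⁻¹' s = ⋃ k, R ⁻¹' {k} ∩ g k ⁻¹' s := by
    ext ω
    simp only [Set.mem_preimage, Set.mem_iUnion, Set.mem_inter_iff, Set.mem_singleton_iff]
    exact ⟨fun h => ⟨R ω, rfl, h⟩, fun ⟨k, hk, hks⟩ => hk ▸ hks⟩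
  rw [h]
  exact MeasurableSet.iUnion fun k => (hRm (measurableSet_singleton k)).inter (hg k hs)

private lemma inducing_R_meas (F : Ω ≃ᵐ Ω) (Ωhat : Set Ω) (hΩhat : MeasurableSet Ωhat)
    (R : Ω → ℕ) (hR : ∀ ω, R ω = sInf {n : ℕ | 1 ≤ n ∧ (⇑F)^[n] ω ∈ Ωhat}) :
    Measurable R := by
  have hiterm : ∀ n : ℕ, Measurable ((⇑F)^[n]) := fun n => F.measurable.iterate n
  apply measurable_to_countable'
  intro k
  rcases Nat.eq_zero_or_pos k with rfl | hk
  · have : R ⁻¹' {0} = ⋂ (n : ℕ) (_ : 1 ≤ n), (⇑F)^[n] ⁻¹' Ωhatᶜ := by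
      ext ω
      simp only [Set.mem_preimage, Set.mem_singleton_iff, hR ω, Set.mem_iInter,
        Set.mem_compl_iff]
      constructor
      · intro h n hn hmem
        have hmem' := Nat.sInf_mem (⟨n, show n ∈ {n : ℕ | 1 ≤ n ∧ (⇑F)^[n] ω ∈ Ωhat} from
          ⟨hn, hmem⟩⟩ : {n : ℕ | 1 ≤ n ∧ (⇑F)^[n] ω ∈ Ωhat}.Nonempty)
        rw [h] at hmem'
        exact absurd hmem'.1 (by omega)
      · intro h
        have : {n : ℕ | 1 ≤ n ∧ (⇑F)^[n] ω ∈ Ωhat} = ∅ := by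
          ext n; simp only [Set.mem_setOf_eq, Set.mem_empty_iff_false, iff_false]
          rintro ⟨h1, h2⟩; exact h n h1 h2
        rw [this, Nat.sInf_empty]
    rw [this]
    exact MeasurableSet.iInter fun n => MeasurableSet.iInter fun _ => (hiterm n) hΩhat.compl
  · have : R ⁻¹' {k} = (⇑F)^[k] ⁻¹' Ωhat ∩ ⋂ (j : ℕ) (_ : 1 ≤ j) (_ : j < k), (⇑F)^[j] ⁻¹' Ωhatᶜ := by
      ext ω
      simp only [Set.mem_preimage, Set.mem_singleton_iff, hR ω, Set.mem_inter_iff,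
        Set.mem_iInter, Set.mem_compl_iff]
      set S := {n : ℕ | 1 ≤ n ∧ (⇑F)^[n] ω ∈ Ωhat} with hS
      constructor
      · intro h
        have hne : S.Nonempty := by
          by_contra hemp
          rw [Set.not_nonempty_iff_eq_empty] at hemp
          rw [hemp, Nat.sInf_empty] at h; omega
        have hmem := Nat.sInf_mem hne
        rw [h] at hmem
        refine ⟨hmem.2, fun j h1 h2 hmemj => ?_⟩
        have := Nat.sInf_le (show j ∈ S from ⟨h1, hmemj⟩)
        omega
      · rintro ⟨h1, h2⟩
        have hkS : k ∈ S := ⟨hk, h1⟩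
        refine le_antisymm (Nat.sInf_le hkS) ?_
        have hne : S.Nonempty := ⟨k, hkS⟩
        have hmem := Nat.sInf_mem hne
        by_contra hlt
        push_neg at hlt
        exact h2 _ hmem.1 hlt hmem.2
    rw [this]
    exact ((hiterm k) hΩhat).inter (MeasurableSet.iInter fun j => MeasurableSet.iInter fun _ =>
      MeasurableSet.iInter fun _ => (hiterm j) hΩhat.compl)

private lemma inducing_key_lintegral (ν : Measure Ω) [IsProbabilityMeasure ν]
    (F : Ω ≃ᵐ Ω) (hF : Ergodic F ν) (Ωhat : Set Ω) (hΩhat : MeasurableSet Ωhat)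
    (hpos : 0 < ν Ωhat) (g : Ω → ℝ≥0∞) (hg : Measurable g) :
    ∑' n : ℕ, ∫⁻ ω in Ωhat ∩ {ω | ∀ j, 1 ≤ j → j ≤ n → (⇑F)^[j] ω ∉ Ωhat}, g ((⇑F)^[n] ω) ∂ν
      = ∫⁻ ω, g ω ∂ν := by
  set A : ℕ → Set Ω := fun n => Ωhat ∩ {ω | ∀ j, 1 ≤ j → j ≤ n → (⇑F)^[j] ω ∉ Ωhat} with hA
  have hiterm : ∀ n : ℕ, Measurable ((⇑F)^[n]) := fun n => F.measurable.iterate n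
  have hsiterm : ∀ n : ℕ, Measurable ((⇑F.symm)^[n]) := fun n => F.symm.measurable.iterate n
  have hAmeas : ∀ n, MeasurableSet (A n) := by
    intro n
    refine hΩhat.inter ?_
    have : {ω | ∀ j, 1 ≤ j → j ≤ n → (⇑F)^[j] ω ∉ Ωhat}
        = ⋂ (j : ℕ) (_ : 1 ≤ j) (_ : j ≤ n), (⇑F)^[j] ⁻¹' Ωhatᶜ := by
      ext ω; simp [Set.mem_iInter]
    rw [this]
    exact MeasurableSet.iInter fun j => MeasurableSet.iInter fun _ =>
      MeasurableSet.iInter fun _ => (hiterm j) hΩhat.compl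
  set B : ℕ → Set Ω := fun n => (⇑F.symm)^[n] ⁻¹' (A n) with hB
  have hBmeas : ∀ n, MeasurableSet (B n) := fun n => (hsiterm n) (hAmeas n)
  have hBiff : ∀ n x, x ∈ B n ↔
      ((⇑F.symm)^[n] x ∈ Ωhat ∧ ∀ m < n, (⇑F.symm)^[m] x ∉ Ωhat) := by
    intro n x
    constructor
    · rintro ⟨h1, h2⟩
      refine ⟨h1, fun m hm => ?_⟩
      have h3 := h2 (n - m) (by omega) (by omega)
      rwa [inducing_iter_symm F (by omega) x, Nat.sub_sub_self hm.le] at h3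
    · rintro ⟨h1, h2⟩
      refine ⟨h1, fun j hj1 hj2 => ?_⟩
      rw [inducing_iter_symm F hj2 x]
      exact h2 (n - j) (by omega)
  have step1 : ∀ n, ∫⁻ ω in A n, g ((⇑F)^[n] ω) ∂ν = ∫⁻ x in B n, g x ∂ν := by
    intro n
    have hmp : MeasurePreserving ((⇑F)^[n]) ν ν := hF.toMeasurePreserving.iterate n
    calc ∫⁻ ω in A n, g ((⇑F)^[n] ω) ∂ν
        = ∫⁻ ω, (A n).indicator (fun ω => g ((⇑F)^[n] ω)) ω ∂ν := by
          rw [lintegral_indicator (hAmeas n)]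
      _ = ∫⁻ ω, (B n).indicator g ((⇑F)^[n] ω) ∂ν := by
          refine lintegral_congr fun ω => ?_
          by_cases h : ω ∈ A n
          · have h' : (⇑F)^[n] ω ∈ B n := by
              simp only [hB, Set.mem_preimage, inducing_symm_iter F n ω]; exact h
            rw [Set.indicator_of_mem h, Set.indicator_of_mem h']
          · have h' : (⇑F)^[n] ω ∉ B n := by
              simp only [hB, Set.mem_preimage, inducing_symm_iter F n ω]; exact h
            rw [Set.indicator_of_notMem h, Set.indicator_of_notMem h']
      _ = ∫⁻ x, (B n).indicator g x ∂ν :=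
          hmp.lintegral_comp (hg.indicator (hBmeas n))
      _ = ∫⁻ x in B n, g x ∂ν := lintegral_indicator (hBmeas n) g
  have hdisj : Pairwise (Function.onFun Disjoint B) := by
    intro m n hmn
    rcases hmn.lt_or_gt with h | h
    · refine Set.disjoint_left.2 fun x hxm hxn => ?_
      exact ((hBiff n x).1 hxn).2 m h ((hBiff m x).1 hxm).1
    · refine Set.disjoint_left.2 fun x hxm hxn => ?_
      exact ((hBiff m x).1 hxm).2 n h ((hBiff n x).1 hxn).1
  have hUnion : (⋃ n, B n) = {x | ∃ n, (⇑F.symm)^[n] x ∈ Ωhat} := by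
    ext x
    simp only [Set.mem_iUnion, Set.mem_setOf_eq]
    constructor
    · rintro ⟨n, hn⟩; exact ⟨n, ((hBiff n x).1 hn).1⟩
    · rintro h
      classical
      refine ⟨Nat.find h, (hBiff _ x).2 ⟨Nat.find_spec h, fun m hm => Nat.find_min h hm⟩⟩
  set V : Set Ω := {x | ∃ n, (⇑F.symm)^[n] x ∈ Ωhat} with hV
  have hVmeas : MeasurableSet V := by
    have : V = ⋃ n, (⇑F.symm)^[n] ⁻¹' Ωhat := by ext x; simp [hV]
    rw [this]
    exact MeasurableSet.iUnion fun n => (hsiterm n) hΩhat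
  have hVsub : V ⊆ ⇑F ⁻¹' V := by
    rintro x ⟨n, hn⟩
    refine ⟨n + 1, ?_⟩
    rwa [Function.iterate_succ_apply, F.symm_apply_apply]
  have hV1 : ν V = 1 := by
    rcases hF.ae_empty_or_univ_of_ae_le_preimage' hVmeas.nullMeasurableSet
        (HasSubset.Subset.eventuallyLE hVsub) (measure_ne_top ν V) with h | h
    · exfalso
      have : ν Ωhat = 0 := by
        have hsub : Ωhat ⊆ V := fun x hx => ⟨0, hx⟩
        exact measure_mono_null hsub (by simpa using measure_congr h)
      exact hpos.ne' this
    · simpa using measure_congr h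
  calc ∑' n, ∫⁻ ω in A n, g ((⇑F)^[n] ω) ∂ν
      = ∑' n, ∫⁻ x in B n, g x ∂ν := tsum_congr step1
    _ = ∫⁻ x in ⋃ n, B n, g x ∂ν := (lintegral_iUnion hBmeas hdisj g).symm
    _ = ∫⁻ x in V, g x ∂ν := by rw [hUnion]
    _ = ∫⁻ x, g x ∂ν := by
        rw [Measure.restrict_eq_self_of_ae_mem]
        have h0 : ν Vᶜ = 0 := by
          rw [measure_compl hVmeas (measure_ne_top ν V), hV1, measure_univ, tsub_self]
        rw [ae_iff]
        exact h0
private lemma inducing_key2 (ν : Measure Ω) [IsProbabilityMeasure ν]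
    (F : Ω ≃ᵐ Ω) (hF : Ergodic F ν) (Ωhat : Set Ω) (hΩhat : MeasurableSet Ωhat)
    (hpos : 0 < ν Ωhat)
    (R : Ω → ℕ) (hR : ∀ ω, R ω = sInf {n : ℕ | 1 ≤ n ∧ (⇑F)^[n] ω ∈ Ωhat})
    (hRfin : ∀ᵐ ω ∂(ν.restrict Ωhat), ∃ n : ℕ, 1 ≤ n ∧ (⇑F)^[n] ω ∈ Ωhat)
    (g : Ω → ℝ≥0∞) (hg : Measurable g) :
    ∫⁻ ω in Ωhat, ∑ n ∈ Finset.range (R ω), g ((⇑F)^[n] ω) ∂ν = ∫⁻ ω, g ω ∂ν := by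
  classical
  have hiterm : ∀ n : ℕ, Measurable ((⇑F)^[n]) := fun n => F.measurable.iterate n
  set A' : ℕ → Set Ω := fun n => {ω | ∀ j, 1 ≤ j → j ≤ n → (⇑F)^[j] ω ∉ Ωhat} with hA'
  have hA'meas : ∀ n, MeasurableSet (A' n) := by
    intro n
    have : A' n = ⋂ (j : ℕ) (_ : 1 ≤ j) (_ : j ≤ n), (⇑F)^[j] ⁻¹' Ωhatᶜ := by
      ext ω; simp [hA', Set.mem_iInter]
    rw [this]
    exact MeasurableSet.iInter fun j => MeasurableSet.iInter fun _ =>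
      MeasurableSet.iInter fun _ => (hiterm j) hΩhat.compl
  have hae : ∀ᵐ ω ∂ν.restrict Ωhat,
      ∑ n ∈ Finset.range (R ω), g ((⇑F)^[n] ω)
        = ∑' n, (A' n).indicator (fun ω => g ((⇑F)^[n] ω)) ω := by
    filter_upwards [hRfin] with ω hex
    have hne : {n : ℕ | 1 ≤ n ∧ (⇑F)^[n] ω ∈ Ωhat}.Nonempty := hex
    have hiff : ∀ n, ω ∈ A' n ↔ n < R ω := by
      intro n
      rw [hR ω]
      constructor
      · intro h
        have hmem := Nat.sInf_mem hne
        by_contra hle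
        push_neg at hle
        exact h _ hmem.1 hle hmem.2
      · intro h j h1 h2 hmem
        have := Nat.sInf_le (show j ∈ {n : ℕ | 1 ≤ n ∧ (⇑F)^[n] ω ∈ Ωhat} from ⟨h1, hmem⟩)
        omega
    calc ∑ n ∈ Finset.range (R ω), g ((⇑F)^[n] ω)
        = ∑' n, if n < R ω then g ((⇑F)^[n] ω) else 0 := by
          rw [tsum_eq_sum (s := Finset.range (R ω))
            (fun b hb => if_neg (by simpa using hb))]
          exact (Finset.sum_congr rfl fun n hn => (if_pos (Finset.mem_range.1 hn)).symm)
      _ = ∑' n, (A' n).indicator (fun ω => g ((⇑F)^[n] ω)) ω := by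
          refine tsum_congr fun n => ?_
          rw [Set.indicator_apply]
          exact if_congr (hiff n).symm rfl rfl
  calc ∫⁻ ω in Ωhat, ∑ n ∈ Finset.range (R ω), g ((⇑F)^[n] ω) ∂ν
      = ∫⁻ ω in Ωhat, ∑' n, (A' n).indicator (fun ω => g ((⇑F)^[n] ω)) ω ∂ν :=
        lintegral_congr_ae hae
    _ = ∑' n, ∫⁻ ω in Ωhat, (A' n).indicator (fun ω => g ((⇑F)^[n] ω)) ω ∂ν :=
        lintegral_tsum fun n =>
          ((hg.comp (hiterm n)).indicator (hA'meas n)).aemeasurable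
    _ = ∑' n, ∫⁻ ω in Ωhat ∩ A' n, g ((⇑F)^[n] ω) ∂ν := by
        refine tsum_congr fun n => ?_
        rw [lintegral_indicator (hA'meas n), Measure.restrict_restrict (hA'meas n),
          Set.inter_comm]
    _ = ∫⁻ ω, g ω ∂ν := inducing_key_lintegral ν F hF Ωhat hΩhat hpos g hg

end InducingAux

/-- **Proposition (Integral identity for induced transformations).**
If `F` is an invertible ergodic measure-preserving transformation of a probability space,
`Ωhat` has measure in `(0,1)`, `R` is the first return time to `Ωhat`, and `ζ ≥ 0` is
`ν`-integrable, then `ζhat = Σ_{n<R} ζ∘Fⁿ` is integrable for the normalized restricted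
measure `ν̂ = ν(·∩Ωhat)/ν(Ωhat)` and `∫ ζhat dν̂ = (1/ν(Ωhat))·∫ ζ dν`. -/
theorem inducing_integral
    {Ω : Type*} [MeasurableSpace Ω] (ν : Measure Ω) [IsProbabilityMeasure ν]
    (F : Ω ≃ᵐ Ω) (hF : Ergodic F ν)
    (Ωhat : Set Ω) (hΩhat : MeasurableSet Ωhat) (hpos : 0 < ν Ωhat) (hlt : ν Ωhat < 1)
    (R : Ω → ℕ) (hR : ∀ ω, R ω = sInf {n : ℕ | 1 ≤ n ∧ (⇑F)^[n] ω ∈ Ωhat})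
    (hRfin : ∀ᵐ ω ∂(ν.restrict Ωhat), ∃ n : ℕ, 1 ≤ n ∧ (⇑F)^[n] ω ∈ Ωhat)
    (ζ : Ω → ℝ) (hζnn : ∀ ω, 0 ≤ ζ ω) (hζ : Integrable ζ ν) :
    Integrable (fun ω => ∑ n ∈ Finset.range (R ω), ζ ((⇑F)^[n] ω))
        ((ν Ωhat)⁻¹ • ν.restrict Ωhat) ∧
    ∫ ω, (∑ n ∈ Finset.range (R ω), ζ ((⇑F)^[n] ω)) ∂((ν Ωhat)⁻¹ • ν.restrict Ωhat)
      = (ν Ωhat).toReal⁻¹ * ∫ ω, ζ ω ∂ν := by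
  have hiterm : ∀ n : ℕ, Measurable ((⇑F)^[n]) := fun n => F.measurable.iterate n
  obtain ⟨ζ', hζ'm, hζeq⟩ := hζ.aemeasurable
  set g : Ω → ℝ≥0∞ := fun ω => ENNReal.ofReal (ζ' ω) with hgdef
  have hg : Measurable g := ENNReal.measurable_ofReal.comp hζ'm
  set f : Ω → ℝ := fun ω => ∑ n ∈ Finset.range (R ω), ζ ((⇑F)^[n] ω) with hfdef
  have hfnn : ∀ ω, 0 ≤ f ω := fun ω => Finset.sum_nonneg fun n _ => hζnn _
  -- a.e. agreement of ζ and ζ' along all iterates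
  have h1 : ∀ᵐ ω ∂ν, ∀ n : ℕ, ζ ((⇑F)^[n] ω) = ζ' ((⇑F)^[n] ω) := by
    rw [ae_all_iff]
    intro n
    exact ae_eq_comp (hiterm n).aemeasurable
      (by rwa [(hF.toMeasurePreserving.iterate n).map_eq])
  -- the central lintegral identity
  have hIhat : ∫⁻ ω in Ωhat, ENNReal.ofReal (f ω) ∂ν = ∫⁻ ω, g ω ∂ν := by
    have hcong : ∀ᵐ ω ∂ν.restrict Ωhat,
        ENNReal.ofReal (f ω) = ∑ n ∈ Finset.range (R ω), g ((⇑F)^[n] ω) := by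
      filter_upwards [ae_restrict_of_ae h1] with ω hω
      rw [hfdef]
      simp only
      rw [ENNReal.ofReal_sum_of_nonneg fun n _ => hζnn _]
      exact Finset.sum_congr rfl fun n _ => by rw [hgdef]; simp only; rw [hω n]
    rw [lintegral_congr_ae hcong]
    exact inducing_key2 ν F hF Ωhat hΩhat hpos R hR hRfin g hg
  have hI : ∫⁻ ω, g ω ∂ν = ∫⁻ ω, ENNReal.ofReal (ζ ω) ∂ν := by
    refine lintegral_congr_ae ?_
    filter_upwards [hζeq] with ω hω
    rw [hgdef]; simp only; rw [hω]
  have hfin : ∫⁻ ω, ENNReal.ofReal (ζ ω) ∂ν ≠ ∞ :=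
    (lintegral_ofReal_ne_top_iff_integrable hζ.1 (Filter.Eventually.of_forall hζnn)).2 hζ
  -- integrability
  have hRm : Measurable R := inducing_R_meas F Ωhat hΩhat R hR
  have hfm : Measurable fun ω => ∑ n ∈ Finset.range (R ω), ζ' ((⇑F)^[n] ω) := by
    refine inducing_meas_dep_nat (g := fun k ω => ∑ n ∈ Finset.range k, ζ' ((⇑F)^[n] ω))
      (fun k => ?_) hRm
    exact Finset.measurable_sum _ fun n _ => hζ'm.comp (hiterm n)
  have heq : f =ᵐ[ν.restrict Ωhat] fun ω => ∑ n ∈ Finset.range (R ω), ζ' ((⇑F)^[n] ω) := by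
    filter_upwards [ae_restrict_of_ae h1] with ω hω
    exact Finset.sum_congr rfl fun n _ => hω n
  have hfsm : AEStronglyMeasurable f (ν.restrict Ωhat) :=
    hfm.aestronglyMeasurable.congr heq.symm
  have hInt : Integrable f (ν.restrict Ωhat) := by
    refine ⟨hfsm, ?_⟩
    rw [hasFiniteIntegral_iff_ofReal (Filter.Eventually.of_forall hfnn)]
    rw [show ∫⁻ ω, ENNReal.ofReal (f ω) ∂ν.restrict Ωhat
        = ∫⁻ ω in Ωhat, ENNReal.ofReal (f ω) ∂ν from rfl, hIhat, hI]
    exact hfin.lt_top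
  have hcne : (ν Ωhat)⁻¹ ≠ ∞ := ENNReal.inv_ne_top.2 hpos.ne'
  refine ⟨hInt.smul_measure hcne, ?_⟩
  rw [integral_smul_measure]
  have hintf : ∫ ω, f ω ∂ν.restrict Ωhat = (∫⁻ ω in Ωhat, ENNReal.ofReal (f ω) ∂ν).toReal :=
    integral_eq_lintegral_of_nonneg_ae (Filter.Eventually.of_forall hfnn) hfsm
  have hintz : ∫ ω, ζ ω ∂ν = (∫⁻ ω, ENNReal.ofReal (ζ ω) ∂ν).toReal :=
    integral_eq_lintegral_of_nonneg_ae (Filter.Eventually.of_forall hζnn) hζ.1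
  rw [show (fun ω => ∑ n ∈ Finset.range (R ω), ζ ((⇑F)^[n] ω)) = f from rfl]
  rw [hintf, hIhat, hI, hintz, ENNReal.toReal_inv]
  rw [smul_eq_mul]
end

section
/- Sweep-out estimate for measure-preserving flows (key inequality in the proof of Lemma `no_vertical`): Let (M, ℬ, μ) be a probability space and (φ_t)_{t∈ℝ} a flow of invertible bi-measurable μ-preserving transformations (φ_0 = id, φ_{t+s} = φ_t ∘ φ_s, and μ(φ_t(A)) = μ(A) for all A ∈ ℬ, t ∈ ℝ). Let B ∈ ℬ, γ > 0, and n ∈ ℕ, and assume that the sets ⋃_{t∈[0,nγ]} φ_t(B), ⋃_{t∈[0,nγ]} φ_{−t}(B), and E := (⋃_{t∈[0,γ]} φ_t(B)) \ B are measurable. Then μ(⋃_{t∈[0,nγ]} φ_{−t}(B)) = μ(⋃_{t∈[0,nγ]} φ_t(B)) ≤ μ(B) + n·μ(E). -/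
open MeasureTheory

/-- **Sweep-out estimate for measure-preserving flows.**
For a measure-preserving flow `φ` on a probability space, a set `B`, `γ > 0`, and
`n ∈ ℕ`, the measure of the backward sweep `⋃_{t∈[0,nγ]} φ_{−t}(B)` equals that of the
forward sweep `⋃_{t∈[0,nγ]} φ_t(B)`, which is at most
`μ(B) + n·μ((⋃_{t∈[0,γ]} φ_t(B)) \ B)`. -/
theorem sweep_out
    {M : Type*} [MeasurableSpace M] (μ : Measure M) [IsProbabilityMeasure μ]
    (φ : ℝ → M ≃ᵐ M)
    (hid : ∀ x, φ 0 x = x)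
    (hgrp : ∀ s t x, φ (s + t) x = φ s (φ t x))
    (hpres : ∀ t, MeasurePreserving (φ t) μ μ)
    (B : Set M) (hB : MeasurableSet B) (γ : ℝ) (hγ : 0 < γ) (n : ℕ)
    (hmeas₁ : MeasurableSet (⋃ t ∈ Set.Icc (0:ℝ) (n * γ), φ t '' B))
    (hmeas₂ : MeasurableSet (⋃ t ∈ Set.Icc (0:ℝ) (n * γ), φ (-t) '' B))
    (hmeasE : MeasurableSet ((⋃ t ∈ Set.Icc (0:ℝ) γ, φ t '' B) \ B)) :
    μ (⋃ t ∈ Set.Icc (0:ℝ) (n * γ), φ (-t) '' B)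
        = μ (⋃ t ∈ Set.Icc (0:ℝ) (n * γ), φ t '' B) ∧
    μ (⋃ t ∈ Set.Icc (0:ℝ) (n * γ), φ t '' B)
        ≤ μ B + n * μ ((⋃ t ∈ Set.Icc (0:ℝ) γ, φ t '' B) \ B) := by
  -- basic facts
  have hinv₁ : ∀ (t : ℝ) x, φ (-t) (φ t x) = x := by
    intro t x
    rw [← hgrp, neg_add_cancel, hid]
  have hinv₂ : ∀ (t : ℝ) x, φ t (φ (-t) x) = x := by
    intro t x
    rw [← hgrp, add_neg_cancel, hid]
  have himg : ∀ (t : ℝ) (S : Set M), (φ t) '' S = (φ (-t)) ⁻¹' S := by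
    intro t S
    ext x
    constructor
    · rintro ⟨b, hb, rfl⟩
      simpa [Set.mem_preimage, hinv₁] using hb
    · intro hx
      exact ⟨φ (-t) x, hx, hinv₂ t x⟩
  have hμimg : ∀ (t : ℝ) (S : Set M), MeasurableSet S → μ ((φ t) '' S) = μ S := by
    intro t S hS
    rw [himg, (hpres (-t)).measure_preimage hS.nullMeasurableSet]
  set E : Set M := (⋃ t ∈ Set.Icc (0:ℝ) γ, φ t '' B) \ B with hE
  set a : ℝ := (n : ℝ) * γ with ha
  have ha0 : 0 ≤ a := mul_nonneg (Nat.cast_nonneg n) hγ.le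
  -- membership descriptions
  have mem_fwd : ∀ (c : ℝ) (x : M),
      x ∈ (⋃ t ∈ Set.Icc (0:ℝ) c, φ t '' B) ↔ ∃ t ∈ Set.Icc (0:ℝ) c, φ (-t) x ∈ B := by
    intro c x
    simp only [Set.mem_iUnion, exists_prop]
    constructor
    · rintro ⟨t, ht, b, hb, rfl⟩
      exact ⟨t, ht, by simpa [hinv₁] using hb⟩
    · rintro ⟨t, ht, h⟩
      exact ⟨t, ht, φ (-t) x, h, hinv₂ t x⟩
  have mem_back : ∀ (x : M),
      x ∈ (⋃ t ∈ Set.Icc (0:ℝ) a, φ (-t) '' B) ↔ ∃ t ∈ Set.Icc (0:ℝ) a, φ t x ∈ B := by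
    intro x
    simp only [Set.mem_iUnion, exists_prop]
    constructor
    · rintro ⟨t, ht, b, hb, rfl⟩
      exact ⟨t, ht, by simpa [hinv₂] using hb⟩
    · rintro ⟨t, ht, h⟩
      exact ⟨t, ht, φ t x, h, hinv₁ t x⟩
  -- equality of forward and backward sweeps
  have hback : (⋃ t ∈ Set.Icc (0:ℝ) a, φ (-t) '' B)
      = (φ a) ⁻¹' (⋃ t ∈ Set.Icc (0:ℝ) a, φ t '' B) := by
    ext x
    rw [Set.mem_preimage, mem_back, mem_fwd]
    constructor
    · rintro ⟨t, ⟨ht0, hta⟩, h⟩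
      refine ⟨a - t, ⟨by linarith, by linarith⟩, ?_⟩
      have : φ (-(a - t)) (φ a x) = φ t x := by
        rw [← hgrp]; ring_nf
      rw [this]; exact h
    · rintro ⟨t, ⟨ht0, hta⟩, h⟩
      refine ⟨a - t, ⟨by linarith, by linarith⟩, ?_⟩
      have : φ (a - t) x = φ (-t) (φ a x) := by
        rw [← hgrp]; ring_nf
      rw [this]; exact h
  have heq : μ (⋃ t ∈ Set.Icc (0:ℝ) a, φ (-t) '' B)
      = μ (⋃ t ∈ Set.Icc (0:ℝ) a, φ t '' B) := by
    rw [hback, (hpres a).measure_preimage hmeas₁.nullMeasurableSet]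
  refine ⟨heq, ?_⟩
  -- inductive estimate
  have hU0 : (⋃ t ∈ Set.Icc (0:ℝ) ((0 : ℕ) * γ), φ t '' B) = B := by
    ext x
    rw [mem_fwd]
    constructor
    · rintro ⟨t, ht, h⟩
      have ht0 : t = 0 := by
        simp only [Nat.cast_zero, zero_mul] at ht
        exact le_antisymm ht.2 ht.1
      subst ht0
      simpa [neg_zero, hid] using h
    · intro hx
      exact ⟨0, by simp, by simpa [neg_zero, hid] using hx⟩
  have key : ∀ k : ℕ, μ (⋃ t ∈ Set.Icc (0:ℝ) ((k : ℝ) * γ), φ t '' B) ≤ μ B + k * μ E := by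
    intro k
    induction k with
    | zero => simp [hμimg 0 B hB]
    | succ k ih =>
      have hincl : (⋃ t ∈ Set.Icc (0:ℝ) (((k : ℝ) + 1) * γ), φ t '' B)
          ⊆ (⋃ t ∈ Set.Icc (0:ℝ) ((k : ℝ) * γ), φ t '' B) ∪ (φ ((k : ℝ) * γ)) '' E := by
        rintro x hx
        rw [Set.mem_iUnion₂] at hx
        obtain ⟨t, ⟨ht0, ht1⟩, b, hb, rfl⟩ := hx
        have hk0 : (0:ℝ) ≤ (k : ℝ) * γ := mul_nonneg (Nat.cast_nonneg k) hγ.le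
        by_cases hcase : t ≤ (k : ℝ) * γ
        · left
          exact Set.mem_iUnion₂.2 ⟨t, ⟨ht0, hcase⟩, b, hb, rfl⟩
        · push_neg at hcase
          set s : ℝ := t - (k : ℝ) * γ with hs
          have hsplit : φ t b = φ ((k : ℝ) * γ) (φ s b) := by
            rw [← hgrp, hs]; ring_nf
          have hsmem : s ∈ Set.Icc (0:ℝ) γ := ⟨by simp [hs]; linarith, by simp [hs]; linarith⟩
          by_cases hbB : φ s b ∈ B
          · left
            rw [hsplit]
            exact Set.mem_iUnion₂.2 ⟨(k : ℝ) * γ, ⟨hk0, le_refl _⟩, φ s b, hbB, rfl⟩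
          · right
            rw [hsplit]
            refine ⟨φ s b, ⟨?_, hbB⟩, rfl⟩
            exact Set.mem_iUnion₂.2 ⟨s, hsmem, b, hb, rfl⟩
      calc μ (⋃ t ∈ Set.Icc (0:ℝ) (((k : ℕ) + 1 : ℕ) * γ), φ t '' B)
          ≤ μ ((⋃ t ∈ Set.Icc (0:ℝ) ((k : ℝ) * γ), φ t '' B) ∪ (φ ((k : ℝ) * γ)) '' E) := by
            apply measure_mono
            push_cast
            exact hincl
        _ ≤ μ (⋃ t ∈ Set.Icc (0:ℝ) ((k : ℝ) * γ), φ t '' B) + μ ((φ ((k : ℝ) * γ)) '' E) :=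
            measure_union_le _ _
        _ = μ (⋃ t ∈ Set.Icc (0:ℝ) ((k : ℝ) * γ), φ t '' B) + μ E := by
            rw [hμimg _ _ hmeasE]
        _ ≤ (μ B + k * μ E) + μ E := by gcongr
        _ = μ B + ((k : ℕ) + 1 : ℕ) * μ E := by
            push_cast
            ring
  exact key n
end
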